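/- arXiv:2605.13499 — 4 statements merged into one kernel-verified Lean document; each statement's English description precedes it below -/
import Mathlib

section
/- Let $t > 0$, let $I$ and $J \notin I$ be index labels, $A \subseteq I$ nonempty with complement $A^c = I \setminus A$, and let $\gamma_j$ for $j \in I \cup \{J\}$ lie in a compact set $D \subset \mathbb{C}$. Then for any closed contour $\Gamma_D$ winding once anticlockwise around $D$: $\int_{(\mathbb{R}_+)^I} ds\, \delta\big(t - \sum_{j\in I} s_j\big) \prod_{j\in I} e^{-i\gamma_j s_j} = -\oint_{\Gamma_D} \frac{dz}{2\pi} \Big[\int_{(\mathbb{R}_+)^{A^c\cup\{J\}}} ds\, \delta\big(t - \sum_j s_j\big) \prod_{j\in A^c\cup\{J\}} e^{-i\gamma_j s_j}\Big]\Big|_{\gamma_J = z} \prod_{j\in A} \frac{i}{z - \gamma_j}$. -/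
open MeasureTheory Complex
open scoped Real

/-- The time-simplex integral `∫_{(ℝ₊)^ι} ds δ(t - Σⱼ sⱼ) Πⱼ e^{-iγⱼsⱼ}`, defined by
integrating out the variable with label `i0` via the delta constraint. -/
noncomputable def simplexIntegral {ι : Type} [Fintype ι] [DecidableEq ι]
    (i0 : ι) (t : ℝ) (γ : ι → ℂ) : ℂ :=
  ∫ s in {s : {i : ι // i ≠ i0} → ℝ | (∀ i, 0 ≤ s i) ∧ ∑ i, s i ≤ t},
    (∏ i : {i : ι // i ≠ i0}, Complex.exp (-(I * γ i.val * (s i : ℂ)))) *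
      Complex.exp (-(I * γ i0 * ((t - ∑ i, s i : ℝ) : ℂ)))

namespace Stmt6

def S (κ : Type) [Fintype κ] (t : ℝ) : Set (κ → ℝ) :=
  {s : κ → ℝ | (∀ i, 0 ≤ s i) ∧ ∑ i, s i ≤ t}

noncomputable def G {κ : Type} [Fintype κ] (t : ℝ) (γ0 : ℂ) (γ : κ → ℂ) : ℂ :=
  ∫ s in S κ t,
    (∏ i, Complex.exp (-(I * γ i * (s i : ℂ)))) *
      Complex.exp (-(I * γ0 * ((t - ∑ i, s i : ℝ) : ℂ)))

lemma simplexIntegral_eq_G {ι : Type} [Fintype ι] [DecidableEq ι] (i0 : ι) (t : ℝ) (γ : ι → ℂ) :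
    simplexIntegral i0 t γ = G t (γ i0) (fun i : {i : ι // i ≠ i0} => γ i.val) := rfl

lemma isCompact_S {κ : Type} [Fintype κ] (t : ℝ) : IsCompact (S κ t) := by
  have hsub : S κ t ⊆ Set.pi Set.univ (fun _ : κ => Set.Icc (0:ℝ) t) := by
    rintro s ⟨h0, hsum⟩ i _
    refine ⟨h0 i, le_trans ?_ hsum⟩
    exact Finset.single_le_sum (f := fun j => s j) (fun j _ => h0 j) (Finset.mem_univ i)
  have hclosed : IsClosed (S κ t) := by
    have h1 : IsClosed {s : κ → ℝ | ∀ i, 0 ≤ s i} := by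
      have : {s : κ → ℝ | ∀ i, 0 ≤ s i} = ⋂ i, {s : κ → ℝ | 0 ≤ s i} := by
        ext s; simp
      rw [this]
      exact isClosed_iInter fun i => isClosed_le continuous_const (continuous_apply i)
    have h2 : IsClosed {s : κ → ℝ | ∑ i, s i ≤ t} :=
      isClosed_le (by continuity) continuous_const
    exact h1.inter h2
  exact (isCompact_univ_pi (fun _ => isCompact_Icc)).of_isClosed_subset hclosed hsub

lemma measurableSet_S {κ : Type} [Fintype κ] (t : ℝ) : MeasurableSet (S κ t) :=
  (isCompact_S t).isClosed.measurableSet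

lemma S_empty {κ : Type} [Fintype κ] {t : ℝ} (ht : t < 0) : S κ t = ∅ := by
  ext s
  simp only [S, Set.mem_setOf_eq, Set.mem_empty_iff_false, iff_false, not_and]
  intro h0
  exact not_le.2 (lt_of_lt_of_le ht (Finset.sum_nonneg fun i _ => h0 i)) ∘ id

lemma G_neg {κ : Type} [Fintype κ] {t : ℝ} (ht : t < 0) (γ0 : ℂ) (γ : κ → ℂ) :
    G t γ0 γ = 0 := by
  rw [G, S_empty ht, Measure.restrict_empty, integral_zero_measure]

lemma G_reindex {κ κ' : Type} [Fintype κ] [Fintype κ'] (e : κ' ≃ κ)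
    (t : ℝ) (γ0 : ℂ) (γ : κ → ℂ) : G t γ0 (γ ∘ e) = G t γ0 γ := by
  classical
  have hmp := volume_measurePreserving_piCongrLeft (fun _ : κ => ℝ) e
  have hemb := (MeasurableEquiv.piCongrLeft (fun _ : κ => ℝ) e).measurableEmbedding
  unfold G
  have hco : ∀ (x : κ' → ℝ) (i : κ),
      (MeasurableEquiv.piCongrLeft (fun _ : κ => ℝ) e) x i = x (e.symm i) := by
    intro x i
    conv_lhs => rw [show i = e (e.symm i) by simp]
    exact Equiv.piCongrLeft_apply_apply (fun _ => ℝ) e x (e.symm i)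
  have hsum : ∀ x : κ' → ℝ,
      ∑ i : κ, (MeasurableEquiv.piCongrLeft (fun _ : κ => ℝ) e) x i = ∑ j, x j := by
    intro x
    simp_rw [hco]
    exact Equiv.sum_comp e.symm x
  have hpre : (MeasurableEquiv.piCongrLeft (fun _ : κ => ℝ) e) ⁻¹' (S κ t) = S κ' t := by
    ext x
    simp only [Set.mem_preimage, S, Set.mem_setOf_eq, hsum]
    constructor
    · rintro ⟨h0, h1⟩
      refine ⟨fun j => ?_, h1⟩
      have := h0 (e j); rwa [hco, Equiv.symm_apply_apply] at this
    · rintro ⟨h0, h1⟩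
      exact ⟨fun i => by rw [hco]; exact h0 _, h1⟩
  rw [← hmp.setIntegral_preimage_emb hemb _ (S κ t), hpre]
  refine setIntegral_congr_fun ((isCompact_S t).isClosed.measurableSet) fun x _ => ?_
  simp only [hco, hsum]
  congr 1
  · rw [← Equiv.prod_comp e (fun i : κ => Complex.exp (-(I * γ i * (x (e.symm i) : ℂ))))]
    exact Finset.prod_congr rfl fun j _ => by simp
  · rw [Equiv.sum_comp e.symm x]

lemma cont_integrand {κ : Type} [Fintype κ] (t : ℝ) (γ0 : ℂ) (γ : κ → ℂ) :
    Continuous fun s : κ → ℝ =>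
      (∏ i, Complex.exp (-(I * γ i * (s i : ℂ)))) *
        Complex.exp (-(I * γ0 * ((t - ∑ i, s i : ℝ) : ℂ))) := by
  fun_prop

lemma G_split {κ₁ κ₂ : Type} [Fintype κ₁] [Fintype κ₂] (t : ℝ) (γ0 : ℂ)
    (γ1 : κ₁ → ℂ) (γ2 : κ₂ → ℂ) :
    G t γ0 (Sum.elim γ1 γ2) =
      ∫ v in S κ₂ t, (∏ i, Complex.exp (-(I * γ2 i * (v i : ℂ)))) * G (t - ∑ i, v i) γ0 γ1 := by
  classical
  set φ := MeasurableEquiv.sumPiEquivProdPi (fun _ : κ₁ ⊕ κ₂ => ℝ) with hφ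
  have hmp : MeasurePreserving φ.symm volume volume :=
    (volume_measurePreserving_sumPiEquivProdPi (fun _ : κ₁ ⊕ κ₂ => ℝ)).symm
  have hemb := φ.symm.measurableEmbedding
  set T : Set ((κ₁ → ℝ) × (κ₂ → ℝ)) :=
    {p | (∀ i, 0 ≤ p.1 i) ∧ (∀ i, 0 ≤ p.2 i) ∧ ∑ i, p.1 i + ∑ i, p.2 i ≤ t} with hT
  have hpre : φ.symm ⁻¹' (S (κ₁ ⊕ κ₂) t) = T := by
    ext ⟨u, v⟩
    simp only [Set.mem_preimage, S, Set.mem_setOf_eq, hT, Sum.forall, Fintype.sum_sum_type]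
    exact ⟨fun ⟨⟨a, b⟩, c⟩ => ⟨a, b, c⟩, fun ⟨a, b, c⟩ => ⟨⟨a, b⟩, c⟩⟩
  set H : (κ₁ → ℝ) × (κ₂ → ℝ) → ℂ := fun p =>
    (∏ i, Complex.exp (-(I * γ1 i * (p.1 i : ℂ)))) *
      ((∏ i, Complex.exp (-(I * γ2 i * (p.2 i : ℂ)))) *
        Complex.exp (-(I * γ0 * ((t - (∑ i, p.1 i + ∑ i, p.2 i) : ℝ) : ℂ)))) with hH
  have hHeq : ∀ p, ((∏ i : κ₁ ⊕ κ₂, Complex.exp (-(I * Sum.elim γ1 γ2 i * (φ.symm p i : ℂ)))) *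
      Complex.exp (-(I * γ0 * ((t - ∑ i : κ₁ ⊕ κ₂, φ.symm p i : ℝ) : ℂ)))) = H p := by
    rintro ⟨u, v⟩
    have hL : ∀ i, (φ.symm (u, v) : (κ₁ ⊕ κ₂) → ℝ) (Sum.inl i) = u i := fun _ => rfl
    have hR : ∀ i, (φ.symm (u, v) : (κ₁ ⊕ κ₂) → ℝ) (Sum.inr i) = v i := fun _ => rfl
    simp only [hH, Fintype.prod_sum_type, Fintype.sum_sum_type, hL, hR, Sum.elim_inl, Sum.elim_inr]
    ring
  have hTc : IsCompact T := by
    have hsub : T ⊆ (Set.pi Set.univ fun _ : κ₁ => Set.Icc (0:ℝ) t) ×ˢ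
        (Set.pi Set.univ fun _ : κ₂ => Set.Icc (0:ℝ) t) := by
      rintro ⟨u, v⟩ ⟨h1, h2, h3⟩
      have hu : ∀ i, u i ≤ ∑ j, u j :=
        fun i => Finset.single_le_sum (f := fun j => u j) (fun j _ => h1 j) (Finset.mem_univ i)
      have hv : ∀ i, v i ≤ ∑ j, v j :=
        fun i => Finset.single_le_sum (f := fun j => v j) (fun j _ => h2 j) (Finset.mem_univ i)
      have hsu : (0:ℝ) ≤ ∑ j, u j := Finset.sum_nonneg fun j _ => h1 j
      have hsv : (0:ℝ) ≤ ∑ j, v j := Finset.sum_nonneg fun j _ => h2 j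
      constructor
      · intro i _
        exact ⟨h1 i, le_trans (hu i) (by linarith)⟩
      · intro i _
        exact ⟨h2 i, le_trans (hv i) (by linarith)⟩
    have hclosed : IsClosed T := by
      have e1 : IsClosed {p : (κ₁ → ℝ) × (κ₂ → ℝ) | ∀ i, 0 ≤ p.1 i} := by
        have : {p : (κ₁ → ℝ) × (κ₂ → ℝ) | ∀ i, 0 ≤ p.1 i} =
            ⋂ i, {p : (κ₁ → ℝ) × (κ₂ → ℝ) | 0 ≤ p.1 i} := by ext p; simp
        rw [this]
        exact isClosed_iInter fun i => isClosed_le continuous_const (by fun_prop)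
      have e2 : IsClosed {p : (κ₁ → ℝ) × (κ₂ → ℝ) | ∀ i, 0 ≤ p.2 i} := by
        have : {p : (κ₁ → ℝ) × (κ₂ → ℝ) | ∀ i, 0 ≤ p.2 i} =
            ⋂ i, {p : (κ₁ → ℝ) × (κ₂ → ℝ) | 0 ≤ p.2 i} := by ext p; simp
        rw [this]
        exact isClosed_iInter fun i => isClosed_le continuous_const (by fun_prop)
      have e3 : IsClosed {p : (κ₁ → ℝ) × (κ₂ → ℝ) | ∑ i, p.1 i + ∑ i, p.2 i ≤ t} :=
        isClosed_le (by fun_prop) continuous_const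
      exact e1.inter (e2.inter e3)
    exact ((isCompact_univ_pi fun _ => isCompact_Icc).prod
      (isCompact_univ_pi fun _ => isCompact_Icc)).of_isClosed_subset hclosed hsub
  have hHcont : Continuous H := by fun_prop
  have hInt : Integrable (T.indicator H) (volume.prod volume) := by
    rw [integrable_indicator_iff hTc.isClosed.measurableSet]
    exact hHcont.continuousOn.integrableOn_compact hTc
  calc G t γ0 (Sum.elim γ1 γ2)
      = ∫ p in φ.symm ⁻¹' (S (κ₁ ⊕ κ₂) t),
          ((∏ i : κ₁ ⊕ κ₂, Complex.exp (-(I * Sum.elim γ1 γ2 i * (φ.symm p i : ℂ)))) *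
            Complex.exp (-(I * γ0 * ((t - ∑ i : κ₁ ⊕ κ₂, φ.symm p i : ℝ) : ℂ)))) ∂volume := by
        rw [G]
        exact (hmp.setIntegral_preimage_emb hemb _ _).symm
    _ = ∫ p in T, H p ∂(volume.prod volume) := by
        rw [hpre, ← Measure.volume_eq_prod]
        exact setIntegral_congr_fun hTc.isClosed.measurableSet fun p _ => hHeq p
    _ = ∫ p, T.indicator H p ∂(volume.prod volume) := by
        rw [integral_indicator hTc.isClosed.measurableSet]
    _ = ∫ v, ∫ u, T.indicator H (u, v) ∂volume ∂volume := integral_prod_symm _ hInt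
    _ = ∫ v, (S κ₂ t).indicator
          (fun v => (∏ i, Complex.exp (-(I * γ2 i * (v i : ℂ)))) * G (t - ∑ i, v i) γ0 γ1)
          v ∂volume := by
        refine integral_congr_ae (Filter.Eventually.of_forall fun v => ?_)
        by_cases hv : v ∈ S κ₂ t
        · obtain ⟨h0v, hsv⟩ := hv
          have hslice : ∀ u, T.indicator H (u, v) =
              (S κ₁ (t - ∑ i, v i)).indicator
                (fun u => (∏ i, Complex.exp (-(I * γ2 i * (v i : ℂ)))) *
                  ((∏ i, Complex.exp (-(I * γ1 i * (u i : ℂ)))) *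
                    Complex.exp (-(I * γ0 * (((t - ∑ i, v i) - ∑ i, u i : ℝ) : ℂ))))) u := by
            intro u
            rw [Set.indicator_apply, Set.indicator_apply]
            have hmem : (u, v) ∈ T ↔ u ∈ S κ₁ (t - ∑ i, v i) := by
              simp only [hT, S, Set.mem_setOf_eq]
              constructor
              · rintro ⟨a, b, c⟩; exact ⟨a, by linarith⟩
              · rintro ⟨a, b⟩; exact ⟨a, h0v, by linarith⟩
            rw [if_congr hmem rfl rfl]
            by_cases hu : u ∈ S κ₁ (t - ∑ i, v i)
            · rw [if_pos hu, if_pos hu]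
              simp only [hH]
              have hc : ((t - (∑ i, u i + ∑ i, v i) : ℝ) : ℂ) =
                  (((t - ∑ i, v i) - ∑ i, u i : ℝ) : ℂ) := by push_cast; ring
              rw [hc]; ring
            · rw [if_neg hu, if_neg hu]
          simp_rw [hslice]
          rw [integral_indicator (isCompact_S _).isClosed.measurableSet,
            Set.indicator_of_mem (show v ∈ S κ₂ t from ⟨h0v, hsv⟩), integral_const_mul]
          rfl
        · have hslice : ∀ u, T.indicator H (u, v) = 0 := by
            intro u
            rw [Set.indicator_apply, if_neg]
            intro hmemT
            obtain ⟨h1, h2, h3⟩ := hmemT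
            refine hv ⟨h2, ?_⟩
            have : (0:ℝ) ≤ ∑ i, u i := Finset.sum_nonneg fun i _ => h1 i
            linarith
          simp_rw [hslice]
          rw [integral_zero, Set.indicator_of_notMem hv]
    _ = ∫ v in S κ₂ t, (∏ i, Complex.exp (-(I * γ2 i * (v i : ℂ)))) * G (t - ∑ i, v i) γ0 γ1 := by
        rw [integral_indicator (isCompact_S _).isClosed.measurableSet]

lemma G_zero (t : ℝ) (ht : 0 ≤ t) (γ0 : ℂ) (γ : Fin 0 → ℂ) :
    G t γ0 γ = Complex.exp (-(I * γ0 * t)) := by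
  rw [G]
  have hS : S (Fin 0) t = Set.univ := by
    ext s; simp [S, ht]
  rw [hS, Measure.restrict_univ]
  have huniv : (volume : Measure (Fin 0 → ℝ)) Set.univ = 1 := by
    rw [show (Set.univ : Set (Fin 0 → ℝ)) = Set.pi Set.univ (fun _ : Fin 0 => Set.univ) by simp]
    rw [MeasureTheory.volume_pi_pi]
    simp
  simp only [Finset.univ_eq_empty, Finset.prod_empty, Finset.sum_empty, one_mul, sub_zero]
  rw [integral_const, measureReal_def, huniv]
  simp

lemma G_succ {n : ℕ} (t : ℝ) (γ0 : ℂ) (γ : Fin (n+1) → ℂ) :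
    G t γ0 γ = ∫ u in Set.Icc (0:ℝ) t,
      Complex.exp (-(I * γ (Fin.last n) * (u : ℂ))) * G (t - u) γ0 (γ ∘ Fin.castSucc) := by
  have h1 : γ ∘ finSumFinEquiv = Sum.elim (γ ∘ Fin.castSucc) (fun _ : Fin 1 => γ (Fin.last n)) := by
    ext (i | i)
    · rfl
    · have : (finSumFinEquiv (Sum.inr i) : Fin (n+1)) = Fin.last n := by
        ext
        simp [finSumFinEquiv, Fin.natAdd, Fin.last, Fin.val_eq_zero i]
      simp only [Function.comp_apply, Sum.elim_inr, this]
  rw [← G_reindex finSumFinEquiv t γ0 γ, h1, G_split]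
  refine (MeasurePreserving.setIntegral_preimage_emb
    ((volume_preserving_funUnique (Fin 1) ℝ).symm _)
    (MeasurableEquiv.funUnique (Fin 1) ℝ).symm.measurableEmbedding _ (S (Fin 1) t)).symm.trans ?_
  have hpre : (MeasurableEquiv.funUnique (Fin 1) ℝ).symm ⁻¹' (S (Fin 1) t) = Set.Icc 0 t := by
    ext u
    simp [S, MeasurableEquiv.funUnique, Equiv.funUnique, Fin.forall_fin_one, Set.mem_Icc]
  rw [hpre]
  refine setIntegral_congr_fun measurableSet_Icc fun u _ => ?_
  simp [MeasurableEquiv.funUnique, Equiv.funUnique]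

lemma conv_exp {τ : ℝ} (hτ : 0 ≤ τ) (δ z : ℂ) (hz : z ≠ δ) :
    ∫ u in Set.Icc (0:ℝ) τ,
        Complex.exp (-(I * δ * u)) * Complex.exp (-(I * z * ((τ - u : ℝ) : ℂ)))
      = Complex.exp (-(I * z * τ)) * (I / (z - δ))
        - Complex.exp (-(I * δ * τ)) * (I / (z - δ)) := by
  have hne : I * (z - δ) ≠ 0 := by
    apply mul_ne_zero Complex.I_ne_zero
    exact sub_ne_zero.2 hz
  have hint : ∀ u : ℝ, Complex.exp (-(I * δ * u)) * Complex.exp (-(I * z * ((τ - u : ℝ) : ℂ)))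
      = Complex.exp (-(I * z * τ)) * Complex.exp ((I * (z - δ)) * u) := by
    intro u
    rw [← Complex.exp_add, ← Complex.exp_add]
    congr 1
    push_cast
    ring
  simp_rw [hint]
  rw [MeasureTheory.integral_Icc_eq_integral_Ioc, ← intervalIntegral.integral_of_le hτ,
    intervalIntegral.integral_const_mul, integral_exp_mul_complex hne]
  have h1 : Complex.exp (-(I * z * τ)) * Complex.exp (I * (z - δ) * τ)
      = Complex.exp (-(I * δ * τ)) := by
    rw [← Complex.exp_add]; congr 1; ring
  have hIzd : I / (z - δ) = (-1) / (I * (z - δ)) := by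
    rw [div_eq_div_iff (sub_ne_zero.2 hz) hne, ← mul_assoc, Complex.I_mul_I]
  rw [hIzd, Complex.ofReal_zero, mul_zero, Complex.exp_zero]
  field_simp
  rw [show I * (τ:ℂ) * (z - δ) = I * (z - δ) * τ by ring, show -(I * (τ:ℂ) * δ) = -(I * δ * τ) by ring]
  linear_combination h1

lemma cauchy_exp (τ : ℝ) (c : ℂ) {R : ℝ} (w : ℂ) (hw : w ∈ Metric.ball c R) :
    (∮ z in C(c, R), Complex.exp (-(I * z * τ)) * (I / (z - w)))
      = (-(2 * π)) * Complex.exp (-(I * w * τ)) := by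
  have hfun : (fun z => Complex.exp (-(I * z * τ)) * (I / (z - w)))
      = fun z => (z - w)⁻¹ • (I * Complex.exp (-(I * z * τ))) := by
    funext z
    rw [smul_eq_mul, div_eq_mul_inv]
    ring
  rw [hfun, DiffContOnCl.circleIntegral_sub_inv_smul (f := fun z => I * Complex.exp (-(I * z * τ)))
    (by apply Differentiable.diffContOnCl; fun_prop) hw]
  rw [smul_eq_mul]
  ring_nf
  rw [Complex.I_sq]
  ring

lemma resolvent_prod_vanish {k : ℕ} (hk : 2 ≤ k) (c : ℂ) {R : ℝ} (hR : 0 < R)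
    (w : Fin k → ℂ) (hw : ∀ i, w i ∈ Metric.ball c R) :
    (∮ z in C(c, R), ∏ i, (I / (z - w i))) = 0 := by
  set f : ℂ → ℂ := fun z => ∏ i, (I / (z - w i)) with hf
  have hne : ∀ z : ℂ, R ≤ dist z c → ∀ i, z ≠ w i := by
    intro z hz i h
    subst h
    exact absurd (hw i) (by simpa [Metric.mem_ball] using hz)
  have hdiff : ∀ z : ℂ, R ≤ dist z c → DifferentiableAt ℂ f z := by
    intro z hz
    apply DifferentiableAt.fun_finsetProd
    intro i _
    apply DifferentiableAt.div (differentiableAt_const _) (by fun_prop)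
    exact sub_ne_zero.2 (hne z hz i)
  -- the integral over C(c, R') equals that over C(c, R) for R' ≥ R
  have hconst : ∀ n : ℕ, (∮ z in C(c, R + 1 + n), f z) = ∮ z in C(c, R), f z := by
    intro n
    apply circleIntegral_eq_of_differentiable_on_annulus_off_countable hR
      (by have := Nat.cast_nonneg (α := ℝ) n; linarith : R ≤ R + 1 + n) Set.countable_empty
    · intro z hz
      have hz' : R ≤ dist z c := by
        simp only [Metric.mem_closedBall, Metric.mem_ball, Set.mem_diff, not_lt] at hz
        exact hz.2
      exact (hdiff z hz').continuousAt.continuousWithinAt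
    · intro z hz
      have hz' : R ≤ dist z c := by
        simp only [Metric.mem_closedBall, Metric.mem_ball, Metric.mem_closedBall,
          Set.mem_diff] at hz
        exact (not_le.1 hz.1.2).le
      exact hdiff z hz'
  have hbound : ∀ n : ℕ, ‖∮ z in C(c, R), f z‖ ≤ 2 * π * (R + 1) / (1 + n) := by
    intro n
    rw [← hconst n]
    have hRn : (0:ℝ) < 1 + n := by positivity
    have key : ∀ z ∈ Metric.sphere c (R + 1 + n), ‖f z‖ ≤ (1 / (1 + n))^k := by
      intro z hz
      rw [hf, norm_prod]
      have : ∀ i, ‖I / (z - w i)‖ ≤ 1 / (1 + n) := by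
        intro i
        rw [norm_div]
        have h1 : dist z c = R + 1 + n := by simpa [Metric.mem_sphere, Complex.dist_eq] using hz
        have h2 : dist (w i) c < R := by simpa [Metric.mem_ball] using hw i
        have h3 : (1:ℝ) + n ≤ ‖z - w i‖ := by
          have h4 := dist_triangle z (w i) c
          rw [show ‖z - w i‖ = dist z (w i) from (Complex.dist_eq z (w i)).symm]
          linarith
        calc ‖I‖ / ‖z - w i‖ = 1 / ‖z - w i‖ := by rw [Complex.norm_I]
          _ ≤ 1 / (1 + n) := one_div_le_one_div_of_le hRn h3
      calc ∏ i, ‖I / (z - w i)‖ ≤ ∏ _i : Fin k, (1 / (1 + (n:ℝ))) :=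
            Finset.prod_le_prod (fun i _ => norm_nonneg _) (fun i _ => this i)
        _ = (1 / (1 + n))^k := by rw [Finset.prod_const, Finset.card_univ, Fintype.card_fin]
    have h1 : ‖∮ z in C(c, R + 1 + n), f z‖ ≤ 2 * π * (R + 1 + n) * (1 / (1 + n))^k :=
      circleIntegral.norm_integral_le_of_norm_le_const (by positivity) key
    refine h1.trans ?_
    have h2 : ((1:ℝ) / (1 + n))^k ≤ (1 / (1 + n))^2 :=
      pow_le_pow_of_le_one (by positivity) (by rw [div_le_one hRn]; linarith) hk
    have h3 : 2 * π * (R + 1 + n) * (1 / (1 + n))^k ≤ 2 * π * (R + 1 + n) * (1 / (1 + n))^2 := by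
      apply mul_le_mul_of_nonneg_left h2 (by positivity)
    refine h3.trans ?_
    rw [div_pow, one_pow, mul_one_div, div_le_div_iff₀ (by positivity) hRn]
    have hn0 : (0:ℝ) ≤ n := Nat.cast_nonneg n
    nlinarith [mul_nonneg (mul_nonneg Real.pi_pos.le hR.le) hn0,
      mul_nonneg (mul_nonneg (mul_nonneg Real.pi_pos.le hR.le) hn0) hn0]
  have htend : Filter.Tendsto (fun n : ℕ => 2 * π * (R + 1) / (1 + n)) Filter.atTop (nhds 0) := by
    have h := (tendsto_const_div_atTop_nhds_zero_nat (2 * π * (R + 1))).comp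
      (Filter.tendsto_add_atTop_nat 1)
    refine h.congr fun n => ?_
    simp only [Function.comp_apply]
    push_cast
    ring_nf
  have : ‖∮ z in C(c, R), f z‖ ≤ 0 :=
    ge_of_tendsto htend (Filter.Eventually.of_forall hbound)
  simpa using norm_le_zero_iff.1 this

lemma circleIntegral_setIntegral_swap {α : Type*} [MeasureSpace α] [TopologicalSpace α]
    [OpensMeasurableSpace α] [T2Space α] [SFinite (volume : Measure α)]
    [IsFiniteMeasureOnCompacts (volume : Measure α)]
    {A : Set α} (hA : IsCompact A)
    (c : ℂ) {R : ℝ} (hR : 0 < R) (f : ℂ → α → ℂ)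
    (hf : ContinuousOn (fun p : ℂ × α => f p.1 p.2) (Metric.sphere c R ×ˢ (Set.univ : Set α))) :
    (∮ z in C(c, R), ∫ x in A, f z x) = ∫ x in A, ∮ z in C(c, R), f z x := by
  set g : ℝ → α → ℂ := fun θ x => (circleMap 0 R θ * I) * f (circleMap c R θ) x with hg
  have hcont : Continuous fun p : ℝ × α => g p.1 p.2 := by
    apply Continuous.mul
    · fun_prop
    · have := hf.comp_continuous (f := fun p : ℝ × α => (circleMap c R p.1, p.2))
        (by fun_prop) (fun p => ⟨circleMap_mem_sphere c hR.le p.1, Set.mem_univ _⟩)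
      exact this
  obtain ⟨C, hC⟩ : ∃ C, ∀ p ∈ (Metric.sphere c R ×ˢ A : Set (ℂ × α)),
      ‖(fun p : ℂ × α => f p.1 p.2) p‖ ≤ C := by
    rcases A.eq_empty_or_nonempty with rfl | hne
    · exact ⟨0, by simp⟩
    · exact ((isCompact_sphere c R).prod hA).exists_bound_of_continuousOn
        (hf.mono (Set.prod_mono_right (Set.subset_univ A)))
  haveI : IsFiniteMeasure ((volume : Measure ℝ).restrict (Set.Ioc 0 (2 * π))) := by
    constructor
    rw [Measure.restrict_apply_univ, Real.volume_Ioc]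
    exact ENNReal.ofReal_lt_top
  haveI : IsFiniteMeasure ((volume : Measure α).restrict A) := by
    constructor
    rw [Measure.restrict_apply_univ]
    exact hA.measure_lt_top
  have hInt : Integrable (Function.uncurry fun θ x => g θ x)
      (((volume : Measure ℝ).restrict (Set.Ioc 0 (2 * π))).prod
        ((volume : Measure α).restrict A)) := by
    refine Integrable.mono' (integrable_const (|R| * C)) hcont.aestronglyMeasurable ?_
    rw [Measure.prod_restrict]
    refine (ae_restrict_mem (measurableSet_Ioc.prod (hA.isClosed.measurableSet))).mono ?_
    rintro ⟨θ, x⟩ ⟨-, hx⟩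
    have : ‖f (circleMap c R θ) x‖ ≤ C := hC (circleMap c R θ, x)
      ⟨circleMap_mem_sphere c hR.le θ, hx⟩
    calc ‖g θ x‖ = |R| * ‖f (circleMap c R θ) x‖ := by
          rw [hg]
          simp [norm_mul, norm_circleMap_zero]
      _ ≤ |R| * C := by
          exact mul_le_mul_of_nonneg_left this (abs_nonneg R)
  calc (∮ z in C(c, R), ∫ x in A, f z x)
      = ∫ θ in (0:ℝ)..(2*π), ∫ x in A, g θ x := by
        simp_rw [circleIntegral, deriv_circleMap, smul_eq_mul, hg, ← integral_const_mul]
    _ = ∫ θ in Set.Ioc (0:ℝ) (2*π), ∫ x in A, g θ x := by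
        rw [intervalIntegral.integral_of_le Real.two_pi_pos.le]
    _ = ∫ x in A, ∫ θ in Set.Ioc (0:ℝ) (2*π), g θ x := integral_integral_swap hInt
    _ = ∫ x in A, ∮ z in C(c, R), f z x := by
        refine setIntegral_congr_fun hA.isClosed.measurableSet fun x _ => ?_
        simp_rw [circleIntegral, deriv_circleMap, smul_eq_mul, hg,
          intervalIntegral.integral_of_le Real.two_pi_pos.le]

lemma circleIntegral_const_mul (a : ℂ) (f : ℂ → ℂ) (c : ℂ) (R : ℝ) :
    (∮ z in C(c, R), a * f z) = a * ∮ z in C(c, R), f z := by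
  simpa [smul_eq_mul] using circleIntegral.integral_smul a f c R

lemma sphere_ne_of_mem_ball {c : ℂ} {R : ℝ} {z w : ℂ} (hz : z ∈ Metric.sphere c R)
    (hw : w ∈ Metric.ball c R) : z ≠ w := by
  intro h
  subst h
  rw [Metric.mem_sphere] at hz
  rw [Metric.mem_ball, hz] at hw
  exact lt_irrefl _ hw

lemma contOn_resolvent {k : ℕ} (c : ℂ) {R : ℝ} (w : Fin k → ℂ)
    (hw : ∀ i, w i ∈ Metric.ball c R) :
    ContinuousOn (fun z => ∏ i, (I / (z - w i))) (Metric.sphere c R) := by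
  apply continuousOn_finset_prod
  intro i _
  apply ContinuousOn.div continuousOn_const (by fun_prop)
  intro z hz
  exact sub_ne_zero.2 (sphere_ne_of_mem_ball hz (hw i))

lemma core (c : ℂ) {R : ℝ} (hR : 0 < R) (n : ℕ) :
    ∀ (τ : ℝ), 0 ≤ τ → ∀ γ : Fin (n+1) → ℂ, (∀ i, γ i ∈ Metric.ball c R) →
    (∮ z in C(c, R), Complex.exp (-(I * z * (τ : ℂ))) * ∏ i, (I / (z - γ i)))
      = (-(2 * (π : ℂ))) * G τ (γ 0) (fun i : Fin n => γ i.succ) := by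
  induction n with
  | zero =>
    intro τ hτ γ hγ
    have h1 : (fun z => Complex.exp (-(I * z * (τ:ℂ))) * ∏ i : Fin (0+1), (I / (z - γ i)))
        = fun z => Complex.exp (-(I * z * (τ:ℂ))) * (I / (z - γ 0)) := by
      funext z; rw [Fin.prod_univ_one]
    rw [h1, cauchy_exp τ c (γ 0) (hγ 0), G_zero τ hτ]
  | succ n ih =>
    intro τ hτ γ hγ
    set γl := γ (Fin.last (n+1)) with hγl
    set P : ℂ → ℂ := fun z => ∏ i : Fin (n+1), (I / (z - γ (Fin.castSucc i))) with hP
    have hγlball : γl ∈ Metric.ball c R := hγ _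
    have hPcont : ContinuousOn P (Metric.sphere c R) :=
      contOn_resolvent c (fun i => γ (Fin.castSucc i)) (fun i => hγ _)
    have hprodsplit : ∀ z : ℂ, (∏ i : Fin (n+1+1), (I / (z - γ i))) = P z * (I / (z - γl)) := by
      intro z
      rw [hP, hγl, Fin.prod_univ_castSucc]
    -- the last-resolvent factor
    have hres : ContinuousOn (fun z => I / (z - γl)) (Metric.sphere c R) := by
      apply ContinuousOn.div continuousOn_const (by fun_prop)
      intro z hz
      exact sub_ne_zero.2 (sphere_ne_of_mem_ball hz hγlball)
    have hprodcont : ContinuousOn (fun z => ∏ i : Fin (n+1+1), (I / (z - γ i)))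
        (Metric.sphere c R) := contOn_resolvent c γ hγ
    have hexpc : Continuous fun z : ℂ => Complex.exp (-(I * z * (τ:ℂ))) := by fun_prop
    -- G-side expansion
    have hGsucc : G τ (γ 0) (fun i : Fin (n+1) => γ i.succ)
        = ∫ u in Set.Icc (0:ℝ) τ, Complex.exp (-(I * γl * (u:ℂ))) *
            G (τ - u) (γ 0) (fun i : Fin n => γ (Fin.castSucc i).succ) := by
      rw [G_succ]
      have e1 : γ (Fin.last n).succ = γl := by rw [hγl, Fin.succ_last]
      have e2 : ((fun i : Fin (n+1) => γ i.succ) ∘ Fin.castSucc) =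
          (fun i : Fin n => γ (Fin.castSucc i).succ) := by
        funext i; rfl
      rw [e2]
      refine setIntegral_congr_fun measurableSet_Icc fun u _ => ?_
      rw [e1]
    -- the main calc
    have hγ' : ∀ i : Fin (n+1), γ (Fin.castSucc i) ∈ Metric.ball c R := fun i => hγ _
    calc (∮ z in C(c, R), Complex.exp (-(I * z * (τ:ℂ))) * ∏ i, (I / (z - γ i)))
        = (∮ z in C(c, R),
            (Complex.exp (-(I * z * (τ:ℂ))) * (∏ i : Fin (n+1+1), (I / (z - γ i)))
              - Complex.exp (-(I * γl * (τ:ℂ))) * (∏ i : Fin (n+1+1), (I / (z - γ i)))))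
          + Complex.exp (-(I * γl * (τ:ℂ))) *
              ∮ z in C(c, R), ∏ i : Fin (n+1+1), (I / (z - γ i)) := by
          rw [circleIntegral.integral_sub
            (ContinuousOn.circleIntegrable hR.le (hexpc.continuousOn.fun_mul hprodcont))
            (ContinuousOn.circleIntegrable hR.le (continuousOn_const.fun_mul hprodcont)),
            ← circleIntegral_const_mul]
          ring
      _ = ∮ z in C(c, R),
            (Complex.exp (-(I * z * (τ:ℂ))) * (∏ i : Fin (n+1+1), (I / (z - γ i)))
              - Complex.exp (-(I * γl * (τ:ℂ))) * (∏ i : Fin (n+1+1), (I / (z - γ i)))) := by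
          rw [resolvent_prod_vanish (by omega) c hR γ hγ, mul_zero, add_zero]
      _ = ∮ z in C(c, R),
            (∫ u in Set.Icc (0:ℝ) τ, Complex.exp (-(I * γl * (u:ℂ))) *
              Complex.exp (-(I * z * ((τ - u : ℝ) : ℂ)))) * P z := by
          refine circleIntegral.integral_congr hR.le fun z hz => ?_
          rw [conv_exp hτ γl z (sphere_ne_of_mem_ball hz hγlball), hprodsplit z]
          ring
      _ = ∮ z in C(c, R),
            ∫ u in Set.Icc (0:ℝ) τ, Complex.exp (-(I * γl * (u:ℂ))) *
              Complex.exp (-(I * z * ((τ - u : ℝ) : ℂ))) * P z := by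
          have heq : (fun z : ℂ => (∫ u in Set.Icc (0:ℝ) τ, Complex.exp (-(I * γl * (u:ℂ))) *
              Complex.exp (-(I * z * ((τ - u : ℝ) : ℂ)))) * P z)
              = (fun z : ℂ => ∫ u in Set.Icc (0:ℝ) τ, Complex.exp (-(I * γl * (u:ℂ))) *
                  Complex.exp (-(I * z * ((τ - u : ℝ) : ℂ))) * P z) :=
            funext fun z => (integral_mul_const _ _).symm
          rw [heq]
      _ = ∫ u in Set.Icc (0:ℝ) τ, ∮ z in C(c, R),
            Complex.exp (-(I * γl * (u:ℂ))) *
              Complex.exp (-(I * z * ((τ - u : ℝ) : ℂ))) * P z := by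
          apply circleIntegral_setIntegral_swap isCompact_Icc c hR
          apply ContinuousOn.mul
          · exact (Continuous.continuousOn (by fun_prop))
          · exact hPcont.comp continuousOn_fst fun p hp => hp.1
      _ = ∫ u in Set.Icc (0:ℝ) τ, Complex.exp (-(I * γl * (u:ℂ))) *
            (-(2 * (π:ℂ)) * G (τ - u) (γ 0) (fun i : Fin n => γ (Fin.castSucc i).succ)) := by
          refine setIntegral_congr_fun measurableSet_Icc fun u hu => ?_
          have h1 : (∮ z in C(c, R), Complex.exp (-(I * γl * (u:ℂ))) *
              Complex.exp (-(I * z * ((τ - u : ℝ) : ℂ))) * P z)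
              = Complex.exp (-(I * γl * (u:ℂ))) * ∮ z in C(c, R),
                  Complex.exp (-(I * z * ((τ - u : ℝ) : ℂ))) * P z := by
            rw [← circleIntegral_const_mul]
            have heq : (fun z : ℂ => Complex.exp (-(I * γl * (u:ℂ))) *
                Complex.exp (-(I * z * ((τ - u : ℝ) : ℂ))) * P z)
                = (fun z : ℂ => Complex.exp (-(I * γl * (u:ℂ))) *
                    (Complex.exp (-(I * z * ((τ - u : ℝ) : ℂ))) * P z)) :=
              funext fun z => by ring
            rw [heq]
          rw [h1]
          congr 1
          have h2 := ih (τ - u) (by simp at hu; linarith [hu.2]) (fun i => γ (Fin.castSucc i)) hγ'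
          have h3 : (fun i : Fin n => γ (Fin.castSucc i.succ)) =
              (fun i : Fin n => γ (Fin.castSucc i).succ) := by
            funext i
            rw [Fin.succ_castSucc]
          simp only [hP]
          simp only [Fin.castSucc_zero] at h2
          rw [h3] at h2
          exact h2
      _ = (-(2 * (π:ℂ))) * ∫ u in Set.Icc (0:ℝ) τ, Complex.exp (-(I * γl * (u:ℂ))) *
            G (τ - u) (γ 0) (fun i : Fin n => γ (Fin.castSucc i).succ) := by
          rw [← integral_const_mul]
          refine setIntegral_congr_fun measurableSet_Icc fun u hu => ?_
          ring
      _ = (-(2 * (π:ℂ))) * G τ (γ 0) (fun i : Fin (n+1) => γ i.succ) := by rw [← hGsucc]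

def eA (a m : ℕ) : (Fin a ⊕ Fin m) ≃ {i : Fin (a+1) ⊕ Fin m // i ≠ Sum.inl 0} where
  toFun x := match x with
    | Sum.inl j => ⟨Sum.inl j.succ, by simp [Fin.succ_ne_zero]⟩
    | Sum.inr j => ⟨Sum.inr j, by simp⟩
  invFun x := match x with
    | ⟨Sum.inl i, h⟩ => Sum.inl (i.pred (fun h0 => h (by rw [h0])))
    | ⟨Sum.inr j, _⟩ => Sum.inr j
  left_inv x := by rcases x with j | j <;> simp
  right_inv x := by
    rcases x with ⟨i | j, h⟩
    · simp
    · rfl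

def eC (m : ℕ) : Fin m ≃ {o : Option (Fin m) // o ≠ none} where
  toFun j := ⟨some j, by simp⟩
  invFun x := match x with
    | ⟨some j, _⟩ => j
    | ⟨none, h⟩ => absurd rfl h
  left_inv j := rfl
  right_inv x := by
    rcases x with ⟨j | j, h⟩
    · exact absurd rfl h
    · rfl

end Stmt6

open Stmt6

/-- From phases to resolvents.  For `t > 0`, an index set
`I = A ⊔ Aᶜ` with `A` nonempty (`|A| = a+1`, `|Aᶜ| = m`), phases `γ` in a compact set
`D ⊂ ℂ`, and any (circular) contour going once anticlockwise around `D`: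
`∫_{(ℝ₊)^I} ds δ(t-Σsⱼ) Π e^{-iγⱼsⱼ}
  = -∮ dz/2π [∫_{(ℝ₊)^{Aᶜ∪{J}}} ds δ(t-Σsⱼ) Π e^{-iγⱼsⱼ}]|_{γ_J=z} Π_{j∈A} i/(z-γⱼ)`,
where the auxiliary label `J` is modelled by `none : Option (Fin m)`. -/
theorem stmt_6 (a m : ℕ) (t : ℝ) (ht : 0 < t)
    (γA : Fin (a + 1) → ℂ) (γC : Fin m → ℂ)
    (D : Set ℂ) (hD : IsCompact D)
    (hγA : ∀ i, γA i ∈ D) (hγC : ∀ i, γC i ∈ D)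
    (c : ℂ) (R : ℝ) (hR : 0 < R) (hDR : D ⊆ Metric.ball c R) :
    simplexIntegral (Sum.inl 0 : Sum (Fin (a + 1)) (Fin m)) t (Sum.elim γA γC)
      = -(1 / (2 * (π : ℂ))) *
          ∮ z in C(c, R),
            simplexIntegral (none : Option (Fin m)) t (fun o => o.elim z γC) *
              ∏ i, (I / (z - γA i)) := by
  have hball : ∀ i, γA i ∈ Metric.ball c R := fun i => hDR (hγA i)
  have hballC : ∀ i, γC i ∈ Metric.ball c R := fun i => hDR (hγC i)
  set γbig : {i : Fin (a+1) ⊕ Fin m // i ≠ Sum.inl 0} → ℂ :=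
    (fun i => Sum.elim γA γC i.val) with hγbig
  have hcompA : γbig ∘ (eA a m) = Sum.elim (fun j : Fin a => γA j.succ) γC := by
    funext x; rcases x with j | j <;> rfl
  have hLHS : simplexIntegral (Sum.inl 0 : Sum (Fin (a + 1)) (Fin m)) t (Sum.elim γA γC)
      = ∫ v in S (Fin m) t, (∏ i, Complex.exp (-(I * γC i * (v i : ℂ)))) *
          G (t - ∑ i, v i) (γA 0) (fun j : Fin a => γA j.succ) := by
    have h := G_reindex (eA a m) t (γA 0) γbig
    rw [hcompA] at h
    calc simplexIntegral (Sum.inl 0 : Sum (Fin (a + 1)) (Fin m)) t (Sum.elim γA γC)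
        = G t (γA 0) γbig := rfl
      _ = G t (γA 0) (Sum.elim (fun j : Fin a => γA j.succ) γC) := h.symm
      _ = _ := G_split t (γA 0) _ γC
  have hRHSpt : ∀ z : ℂ, simplexIntegral (none : Option (Fin m)) t (fun o => o.elim z γC)
      = G t z γC := by
    intro z
    set γpt : {o : Option (Fin m) // o ≠ none} → ℂ :=
      (fun i => Option.elim i.val z γC) with hγpt
    have hcompC : γpt ∘ (eC m) = γC := funext fun j => rfl
    have h := G_reindex (eC m) t z γpt
    rw [hcompC] at h
    calc simplexIntegral (none : Option (Fin m)) t (fun o => o.elim z γC)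
        = G t z γpt := rfl
      _ = G t z γC := h.symm
  have hπ : (π : ℂ) ≠ 0 := Complex.ofReal_ne_zero.2 Real.pi_ne_zero
  have hmain : (∮ z in C(c, R),
        simplexIntegral (none : Option (Fin m)) t (fun o => o.elim z γC) *
          ∏ i, (I / (z - γA i)))
      = -(2 * (π:ℂ)) * simplexIntegral (Sum.inl 0 : Sum (Fin (a + 1)) (Fin m)) t
          (Sum.elim γA γC) := by
    calc (∮ z in C(c, R),
          simplexIntegral (none : Option (Fin m)) t (fun o => o.elim z γC) *
            ∏ i, (I / (z - γA i)))
        = ∮ z in C(c, R), G t z γC * ∏ i, (I / (z - γA i)) := by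
          refine circleIntegral.integral_congr hR.le fun z _ => ?_
          rw [hRHSpt z]
      _ = ∮ z in C(c, R), ∫ v in S (Fin m) t,
            (∏ i, Complex.exp (-(I * γC i * (v i : ℂ)))) *
              Complex.exp (-(I * z * ((t - ∑ i, v i : ℝ) : ℂ))) *
              ∏ i, (I / (z - γA i)) := by
          refine circleIntegral.integral_congr hR.le fun z _ => ?_
          rw [G]
          exact (integral_mul_const _ _).symm
      _ = ∫ v in S (Fin m) t, ∮ z in C(c, R),
            (∏ i, Complex.exp (-(I * γC i * (v i : ℂ)))) *
              Complex.exp (-(I * z * ((t - ∑ i, v i : ℝ) : ℂ))) *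
              ∏ i, (I / (z - γA i)) := by
          apply circleIntegral_setIntegral_swap (isCompact_S t) c hR
          apply ContinuousOn.mul
          · exact Continuous.continuousOn (by fun_prop)
          · exact (contOn_resolvent c γA hball).comp continuousOn_fst fun p hp => hp.1
      _ = ∫ v in S (Fin m) t, (∏ i, Complex.exp (-(I * γC i * (v i : ℂ)))) *
            (-(2 * (π:ℂ)) * G (t - ∑ i, v i) (γA 0) (fun j : Fin a => γA j.succ)) := by
          refine setIntegral_congr_fun (measurableSet_S t) fun v hv => ?_
          have hτ : 0 ≤ t - ∑ i, v i := sub_nonneg.2 hv.2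
          have hpull : (∮ z in C(c, R),
              (∏ i, Complex.exp (-(I * γC i * (v i : ℂ)))) *
                Complex.exp (-(I * z * ((t - ∑ i, v i : ℝ) : ℂ))) *
                ∏ i, (I / (z - γA i)))
              = (∏ i, Complex.exp (-(I * γC i * (v i : ℂ)))) *
                  ∮ z in C(c, R), Complex.exp (-(I * z * ((t - ∑ i, v i : ℝ) : ℂ))) *
                    ∏ i, (I / (z - γA i)) := by
            rw [← circleIntegral_const_mul]
            have heq : (fun z : ℂ => (∏ i, Complex.exp (-(I * γC i * (v i : ℂ)))) *
                Complex.exp (-(I * z * ((t - ∑ i, v i : ℝ) : ℂ))) * ∏ i, (I / (z - γA i)))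
                = fun z : ℂ => (∏ i, Complex.exp (-(I * γC i * (v i : ℂ)))) *
                    (Complex.exp (-(I * z * ((t - ∑ i, v i : ℝ) : ℂ))) *
                      ∏ i, (I / (z - γA i))) := funext fun z => by ring
            rw [heq]
          rw [hpull, core c hR a (t - ∑ i, v i) hτ γA hball]
      _ = -(2 * (π:ℂ)) * ∫ v in S (Fin m) t,
            (∏ i, Complex.exp (-(I * γC i * (v i : ℂ)))) *
              G (t - ∑ i, v i) (γA 0) (fun j : Fin a => γA j.succ) := by
          rw [← integral_const_mul]
          refine setIntegral_congr_fun (measurableSet_S t) fun v hv => ?_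
          ring
      _ = -(2 * (π:ℂ)) * simplexIntegral (Sum.inl 0 : Sum (Fin (a + 1)) (Fin m)) t
            (Sum.elim γA γC) := by rw [← hLHS]
  rw [hmain, ← mul_assoc]
  have hcoef : -(1 / (2 * (π : ℂ))) * -(2 * (π:ℂ)) = 1 := by
    field_simp
  rw [hcoef, one_mul]
end

section
/- Let $t > 0$, $n, n' \geq 0$, and $\gamma_l^+ \in \mathbb{C}$ for $0 \le l \le n$, $\gamma_l^- \in \mathbb{C}$ for $0 \le l \le n'$. Then the product of two time-simplex integrals factorizes as a sum over interlacings: $\Big[\int_{(\mathbb{R}_+)^{n+1}} ds\,\delta(t - \sum_{l=0}^n s_l)\prod_{l=0}^n e^{-is_l\gamma_l^+}\Big]\cdot\Big[\int_{(\mathbb{R}_+)^{n'+1}} ds'\,\delta(t - \sum_{l=0}^{n'} s_l')\prod_{l=0}^{n'} e^{-is_l'\gamma_l^-}\Big] = \sum_{J \text{ interlaces } (n,n')} \int_{(\mathbb{R}_+)^{n+n'+1}} dr\,\delta\big(t - \sum_{j=0}^{n+n'} r_j\big)\prod_{j=0}^{n+n'} e^{-ir_j(\gamma^+_{J_+(j;J)}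 + \gamma^-_{J_-(j;J)})}$. -/
open MeasureTheory Complex Finset

/-- The time-simplex integral with `N+1` variables,
`∫_{(ℝ₊)^{N+1}} ds δ(t - Σ sⱼ) Πⱼ e^{-iγⱼsⱼ}`, defined by integrating out the last
variable via the delta constraint. -/
noncomputable def simplexInt (N : ℕ) (t : ℝ) (γ : Fin (N + 1) → ℂ) : ℂ :=
  ∫ s in {s : Fin N → ℝ | (∀ i, 0 ≤ s i) ∧ ∑ i, s i ≤ t},
    (∏ i : Fin N, Complex.exp (-(I * γ i.castSucc * (s i : ℂ)))) *
      Complex.exp (-(I * γ (Fin.last N) * ((t - ∑ i, s i : ℝ) : ℂ)))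

/-- `J₊(j;J) = Σ_{l=1}^{j} 1(J(l)=+1)` (`0`-indexed: count of `+` among the first `j`
entries of `J`). -/
def Jplus {N : ℕ} (J : Fin N → Bool) (j : ℕ) : ℕ :=
  (Finset.univ.filter fun l : Fin N => (l : ℕ) < j ∧ J l = true).card

/-- `J₋(j;J) = Σ_{l=1}^{j} 1(J(l)=-1)`. -/
def Jminus {N : ℕ} (J : Fin N → Bool) (j : ℕ) : ℕ :=
  (Finset.univ.filter fun l : Fin N => (l : ℕ) < j ∧ J l = false).card


noncomputable def Efn (c : ℂ) (x : ℝ) : ℂ := Complex.exp (-(I * c * x))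

@[simp] lemma Efn_zero (c : ℂ) : Efn c 0 = 1 := by simp [Efn]

lemma Efn_add (c : ℂ) (x y : ℝ) : Efn c (x + y) = Efn c x * Efn c y := by
  simp [Efn, ← Complex.exp_add]; ring_nf

lemma Efn_addc (c d : ℂ) (x : ℝ) : Efn (c + d) x = Efn c x * Efn d x := by
  simp [Efn, ← Complex.exp_add]; ring_nf

lemma Efn_cont (c : ℂ) : Continuous (Efn c) := by
  unfold Efn; fun_prop

lemma Efn_hasDerivAt (c : ℂ) (x : ℝ) :
    HasDerivAt (Efn c) (-(I * c) * Efn c x) x := by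
  have h1 : HasDerivAt (fun x : ℝ => ((x : ℂ))) 1 x := by
    exact Complex.ofRealCLM.hasDerivAt (x := x)
  have h2 : HasDerivAt (fun x : ℝ => -(I * c * x)) (-(I * c)) x := by
    have := (h1.const_mul (I * c)).neg; simp only [mul_one] at this; exact this
  have := (Complex.hasDerivAt_exp (-(I * c * x))).comp x h2
  convert this using 1
  · rfl
  · rfl
  unfold Efn; ring

noncomputable def Gfn : ℕ → (ℕ → ℂ) → ℝ → ℂ
  | 0, γ, t => Efn (γ 0) t
  | (N+1), γ, t => ∫ u in (0:ℝ)..t, Efn (γ (N+1)) (t - u) * Gfn N γ u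

lemma Gfn_succ_rw (N : ℕ) (γ : ℕ → ℂ) (t : ℝ) :
    Gfn (N+1) γ t = Efn (γ (N+1)) t * ∫ u in (0:ℝ)..t, Efn (γ (N+1)) (-u) * Gfn N γ u := by
  rw [Gfn, ← intervalIntegral.integral_const_mul]
  congr 1; ext u
  rw [show t - u = t + (-u) by ring, Efn_add, mul_assoc]

lemma Gfn_cont (N : ℕ) (γ : ℕ → ℂ) : Continuous (Gfn N γ) := by
  induction N with
  | zero => exact Efn_cont _
  | succ N ih =>
    have : Continuous fun t => ∫ u in (0:ℝ)..t, Efn (γ (N+1)) (-u) * Gfn N γ u :=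
      intervalIntegral.continuous_primitive
        (fun a b => (((Efn_cont _).comp continuous_neg).mul ih).intervalIntegrable a b) 0
    rw [show Gfn (N+1) γ = fun t => Efn (γ (N+1)) t * ∫ u in (0:ℝ)..t, Efn (γ (N+1)) (-u) * Gfn N γ u
      from funext (Gfn_succ_rw N γ)]
    exact (Efn_cont (γ (N+1))).mul this

lemma Gfn_hasDerivAt (N : ℕ) (γ : ℕ → ℂ) (t : ℝ) :
    HasDerivAt (Gfn (N+1) γ) (-(I * γ (N+1)) * Gfn (N+1) γ t + Gfn N γ t) t := by
  set c := γ (N+1)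
  have hq : Continuous fun u => Efn c (-u) * Gfn N γ u :=
    ((Efn_cont _).comp continuous_neg).mul (Gfn_cont N γ)
  have hP : HasDerivAt (fun t => ∫ u in (0:ℝ)..t, Efn c (-u) * Gfn N γ u)
      (Efn c (-t) * Gfn N γ t) t :=
    intervalIntegral.integral_hasDerivAt_right (hq.intervalIntegrable 0 t)
      (hq.stronglyMeasurableAtFilter _ _) hq.continuousAt
  have := (Efn_hasDerivAt c t).mul hP
  have hfun : Gfn (N+1) γ = fun t => Efn c t * ∫ u in (0:ℝ)..t, Efn c (-u) * Gfn N γ u := by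
    funext t; exact Gfn_succ_rw N γ t
  rw [hfun]
  convert this using 1
  · rfl
  · rfl
  have h1 : Efn c t * (Efn c (-t) * Gfn N γ t) = Gfn N γ t := by
    rw [← mul_assoc, ← Efn_add]; simp
  simp only [h1]
  ring

lemma Gfn_congr (N : ℕ) {γ γ' : ℕ → ℂ} (h : ∀ j ≤ N, γ j = γ' j) (t : ℝ) :
    Gfn N γ t = Gfn N γ' t := by
  induction N generalizing t with
  | zero => simp [Gfn, h 0 le_rfl]
  | succ N ih =>
    rw [Gfn, Gfn, h (N+1) le_rfl]
    congr 1; ext u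
    rw [ih (fun j hj => h j (hj.trans (Nat.le_succ N)))]

lemma Gfn_shift (N : ℕ) (γ : ℕ → ℂ) (a : ℂ) (t : ℝ) :
    Gfn N (fun j => γ j + a) t = Efn a t * Gfn N γ t := by
  induction N generalizing t with
  | zero => simp [Gfn, Efn_addc, mul_comm]
  | succ N ih =>
    rw [Gfn, Gfn, ← intervalIntegral.integral_const_mul]
    congr 1; ext u
    rw [ih, Efn_addc]
    have key : Efn a u * Efn a (t - u) = Efn a t := by
      rw [← Efn_add]; congr 1; ring
    rw [← key]; ring

lemma ode_unique {c : ℂ} {φ f g : ℝ → ℂ}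
    (hf : ∀ t, HasDerivAt f (c * f t + φ t) t)
    (hg : ∀ t, HasDerivAt g (c * g t + φ t) t)
    (h0 : f 0 = g 0) (t : ℝ) : f t = g t := by
  set D : ℝ → ℂ := fun t => Complex.exp (-(c * t)) * (f t - g t) with hD
  have hexp : ∀ x : ℝ, HasDerivAt (fun t : ℝ => Complex.exp (-(c * t)))
      (-c * Complex.exp (-(c * x))) x := by
    intro x
    have h1 : HasDerivAt (fun t : ℝ => ((t : ℂ))) 1 x := by
      exact Complex.ofRealCLM.hasDerivAt (x := x)
    have h2 : HasDerivAt (fun t : ℝ => -(c * t)) (-c) x := by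
      have := (h1.const_mul c).neg; simp only [mul_one] at this; exact this
    have := (Complex.hasDerivAt_exp (-(c * x))).comp x h2
    convert this using 1
    · rfl
    · rfl
    ring
  have hDd : ∀ x, HasDerivAt D 0 x := by
    intro x
    have h2 : HasDerivAt (fun t => f t - g t) (c * (f x - g x)) x := by
      have := (hf x).sub (hg x)
      convert this using 1; rfl; rfl; ring
    have := (hexp x).mul h2
    convert this using 1
    · rfl
    · rfl
    ring
  have hdiff : Differentiable ℝ D := fun x => (hDd x).differentiableAt
  have hconst : D t = D 0 :=
    is_const_of_deriv_eq_zero hdiff (fun x => (hDd x).deriv) t 0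
  have h1 : Complex.exp (-(c * t)) ≠ 0 := Complex.exp_ne_zero _
  have h2 : Complex.exp (-(c * t)) * (f t - g t) = 0 := by
    have := hconst
    simp only [hD, h0, sub_self, mul_zero] at this
    exact this
  have h3 : f t - g t = 0 := by
    rcases mul_eq_zero.mp h2 with h | h
    · exact absurd h h1
    · exact h
  exact sub_eq_zero.mp h3

lemma card_coe_lt (N j : ℕ) (h : j ≤ N) :
    (Finset.univ.filter fun l : Fin N => (l : ℕ) < j).card = j := by
  have : (Finset.univ.filter fun l : Fin N => (l : ℕ) < j)
      = (Finset.univ : Finset (Fin j)).map (Fin.castLEEmb h) := by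
    ext l
    simp only [Finset.mem_filter, Finset.mem_univ, true_and, Finset.mem_map,
      Fin.castLEEmb, Function.Embedding.coeFn_mk]
    constructor
    · intro hl; exact ⟨⟨l, hl⟩, by simp [Fin.castLE, Fin.ext_iff]⟩
    · rintro ⟨a, rfl⟩; simpa using a.isLt
  rw [this, Finset.card_map, Finset.card_univ, Fintype.card_fin]

lemma Jplus_snoc {K : ℕ} (J' : Fin K → Bool) (c : Bool) {j : ℕ} (hj : j ≤ K) :
    Jplus (Fin.snoc J' c) j = Jplus J' j := by
  simp only [Jplus, Finset.card_filter, Fin.sum_univ_castSucc, Fin.snoc_castSucc,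
    Fin.snoc_last, Fin.coe_castSucc, Fin.val_last]
  rw [if_neg (by omega)]
  simp

lemma Jminus_snoc {K : ℕ} (J' : Fin K → Bool) (c : Bool) {j : ℕ} (hj : j ≤ K) :
    Jminus (Fin.snoc J' c) j = Jminus J' j := by
  simp only [Jminus, Finset.card_filter, Fin.sum_univ_castSucc, Fin.snoc_castSucc,
    Fin.snoc_last, Fin.coe_castSucc, Fin.val_last]
  rw [if_neg (by omega)]
  simp

lemma card_true_snoc {K : ℕ} (J' : Fin K → Bool) (c : Bool) :
    (Finset.univ.filter fun l : Fin (K+1) => (Fin.snoc J' c : Fin (K+1) → Bool) l = true).card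
      = (Finset.univ.filter fun l : Fin K => J' l = true).card + (if c then 1 else 0) := by
  simp only [Finset.card_filter, Fin.sum_univ_castSucc, Fin.snoc_castSucc, Fin.snoc_last]

lemma Jplus_ge {N : ℕ} (J : Fin N → Bool) {j : ℕ} (hj : N ≤ j) :
    Jplus J j = (Finset.univ.filter fun l => J l = true).card := by
  unfold Jplus; congr 1; ext l
  simp [lt_of_lt_of_le l.isLt hj]

lemma Jminus_ge {N : ℕ} (J : Fin N → Bool) {j : ℕ} (hj : N ≤ j) :
    Jminus J j = (Finset.univ.filter fun l => J l = false).card := by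
  unfold Jminus; congr 1; ext l
  simp [lt_of_lt_of_le l.isLt hj]

lemma card_false_eq {N : ℕ} (J : Fin N → Bool) :
    (Finset.univ.filter fun l => J l = false).card
      = N - (Finset.univ.filter fun l => J l = true).card := by
  have h := Finset.card_filter_add_card_filter_not (s := (Finset.univ : Finset (Fin N)))
      (p := fun l => J l = true)
  simp only [Finset.card_univ, Fintype.card_fin] at h
  have h2 : (Finset.univ.filter fun l : Fin N => ¬ J l = true)
      = (Finset.univ.filter fun l => J l = false) := by
    ext l; simp
  rw [h2] at h
  omega

lemma Jplus_false {N : ℕ} (j : ℕ) : Jplus (fun _ : Fin N => false) j = 0 := by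
  simp [Jplus]

lemma Jminus_false {N : ℕ} {j : ℕ} (hj : j ≤ N) :
    Jminus (fun _ : Fin N => false) j = j := by
  have h : Jminus (fun _ : Fin N => false) j
      = (Finset.univ.filter fun l : Fin N => (l : ℕ) < j).card := by
    unfold Jminus; congr 1; ext l; simp
  rw [h, card_coe_lt N j hj]

lemma Jminus_true {N : ℕ} (j : ℕ) : Jminus (fun _ : Fin N => true) j = 0 := by
  simp [Jminus]

lemma Jplus_true {N : ℕ} {j : ℕ} (hj : j ≤ N) :
    Jplus (fun _ : Fin N => true) j = j := by
  have h : Jplus (fun _ : Fin N => true) j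
      = (Finset.univ.filter fun l : Fin N => (l : ℕ) < j).card := by
    unfold Jplus; congr 1; ext l; simp
  rw [h, card_coe_lt N j hj]

lemma Gfn_succ_zero (N : ℕ) (γ : ℕ → ℂ) : Gfn (N+1) γ 0 = 0 := by
  rw [Gfn, intervalIntegral.integral_same]

lemma main_lemma : ∀ (k n n' M : ℕ), n + n' = k → M = n + n' → ∀ (γp γm : ℕ → ℂ) (t : ℝ),
    Gfn n γp t * Gfn n' γm t
      = ∑ J ∈ Finset.univ.filter
            (fun J : Fin M → Bool => (Finset.univ.filter fun l => J l = true).card = n),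
          Gfn M (fun j => γp (Jplus J j) + γm (Jminus J j)) t := by
  intro k
  induction k using Nat.strong_induction_on with
  | _ k ih =>
  intro n n' M hk hM γp γm t
  rcases Nat.eq_zero_or_pos n with hn | hnpos
  · -- n = 0
    subst hn
    have hM' : M = n' := by omega
    subst hM'
    have hset : (Finset.univ.filter
        (fun J : Fin M → Bool => (Finset.univ.filter fun l => J l = true).card = 0))
        = {fun _ => false} := by
      ext J
      constructor
      · intro hJ
        have h0 : (Finset.univ.filter fun l => J l = true).card = 0 :=
          (Finset.mem_filter.mp hJ).2
        have hemp : (Finset.univ.filter fun l => J l = true) = ∅ :=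
          Finset.card_eq_zero.mp h0
        rw [Finset.mem_singleton]
        funext l
        by_contra hc
        have hl : J l = true := by revert hc; cases J l <;> simp
        have hmem : l ∈ (Finset.univ.filter fun l => J l = true) :=
          Finset.mem_filter.mpr ⟨Finset.mem_univ l, hl⟩
        rw [hemp] at hmem
        exact absurd hmem (Finset.notMem_empty l)
      · intro hJ
        rw [Finset.mem_singleton] at hJ
        subst hJ
        refine Finset.mem_filter.mpr ⟨Finset.mem_univ _, ?_⟩
        simp
    rw [hset, Finset.sum_singleton]
    have hcongr : Gfn M (fun j => γp (Jplus (fun _ : Fin M => false) j)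
        + γm (Jminus (fun _ : Fin M => false) j)) t
        = Gfn M (fun j => γm j + γp 0) t := by
      apply Gfn_congr
      intro j hj
      rw [Jplus_false, Jminus_false hj, add_comm]
    rw [hcongr, Gfn_shift]
    rfl
  rcases Nat.eq_zero_or_pos n' with hn' | hnpos'
  · -- n' = 0
    subst hn'
    obtain ⟨a, rfl⟩ : ∃ a, n = a + 1 := ⟨n - 1, by omega⟩
    have hM' : M = a + 1 := by omega
    subst hM'
    have hset : (Finset.univ.filter
        (fun J : Fin (a+1) → Bool => (Finset.univ.filter fun l => J l = true).card = a+1))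
        = {fun _ => true} := by
      ext J
      simp only [Finset.mem_filter, Finset.mem_univ, true_and, Finset.mem_singleton]
      constructor
      · intro h
        have huniv : (Finset.univ.filter fun l => J l = true) = Finset.univ :=
          Finset.eq_univ_of_card _ (by simpa using h)
        funext l
        have := Finset.filter_eq_self.mp huniv l (Finset.mem_univ l)
        simpa using this
      · intro h; rw [h]; simp
    rw [hset, Finset.sum_singleton]
    have hcongr : Gfn (a+1) (fun j => γp (Jplus (fun _ : Fin (a+1) => true) j)
        + γm (Jminus (fun _ : Fin (a+1) => true) j)) t
        = Gfn (a+1) (fun j => γp j + γm 0) t := by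
      apply Gfn_congr
      intro j hj
      rw [Jplus_true hj, Jminus_true]
    rw [hcongr, Gfn_shift]
    have : Gfn 0 γm t = Efn (γm 0) t := rfl
    rw [this]
    ring
  · -- n = a+1, n' = b+1
    obtain ⟨a, rfl⟩ : ∃ a, n = a + 1 := ⟨n - 1, by omega⟩
    obtain ⟨b, rfl⟩ : ∃ b, n' = b + 1 := ⟨n' - 1, by omega⟩
    have hM' : M = (a + 1 + b) + 1 := by omega
    subst hM'
    set K := a + 1 + b with hK
    set μ : (Fin (K+1) → Bool) → ℕ → ℂ :=
      fun J j => γp (Jplus J j) + γm (Jminus J j) with hμ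
    set Fil : Finset (Fin (K+1) → Bool) := Finset.univ.filter
      (fun J : Fin (K+1) → Bool => (Finset.univ.filter fun l => J l = true).card = a+1)
      with hFil
    set c : ℂ := -(I * (γp (a+1) + γm (b+1))) with hc
    set φ : ℝ → ℂ := fun t => Gfn a γp t * Gfn (b+1) γm t + Gfn (a+1) γp t * Gfn b γm t
      with hφdef
    set P : ℝ → ℂ := fun t => Gfn (a+1) γp t * Gfn (b+1) γm t with hPdef
    set S : ℝ → ℂ := fun t => ∑ J ∈ Fil, Gfn (K+1) (μ J) t with hSdef
    have hμtop : ∀ J ∈ Fil, μ J (K+1) = γp (a+1) + γm (b+1) := by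
      intro J hJ
      have hJc : (Finset.univ.filter fun l => J l = true).card = a+1 :=
        (Finset.mem_filter.mp hJ).2
      have h1 : Jplus J (K+1) = a+1 := by
        rw [Jplus_ge J (by omega), hJc]
      have h2 : Jminus J (K+1) = b+1 := by
        rw [Jminus_ge J (by omega), card_false_eq, hJc]
        omega
      simp only [hμ, h1, h2]
    have hP : ∀ t, HasDerivAt P (c * P t + φ t) t := by
      intro t
      have := (Gfn_hasDerivAt a γp t).mul (Gfn_hasDerivAt b γm t)
      convert this using 1
      · rfl
      · rfl
      simp only [hPdef, hφdef, hc]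
      ring
    have hS : ∀ t, HasDerivAt S (c * S t + ∑ J ∈ Fil, Gfn K (μ J) t) t := by
      intro t
      have hsum := HasDerivAt.sum (u := Fil) (x := t)
        (A := fun J t => Gfn (K+1) (μ J) t)
        (A' := fun J => -(I * μ J (K+1)) * Gfn (K+1) (μ J) t + Gfn K (μ J) t)
        (fun J _ => Gfn_hasDerivAt K (μ J) t)
      have hterm : ∀ J ∈ Fil, (-(I * μ J (K+1)) * Gfn (K+1) (μ J) t + Gfn K (μ J) t)
          = c * Gfn (K+1) (μ J) t + Gfn K (μ J) t := by
        intro J hJ; rw [hμtop J hJ, hc]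
      convert hsum using 1
      · rfl
      · ext y; rw [Finset.sum_apply]
      rw [Finset.sum_congr rfl hterm, Finset.sum_add_distrib, ← Finset.mul_sum]
    have hlow : ∀ t, (∑ J ∈ Fil, Gfn K (μ J) t) = φ t := by
      intro t
      have hrw : (∑ J ∈ Fil, Gfn K (μ J) t)
          = ∑ J : Fin (K+1) → Bool,
              (if (Finset.univ.filter fun l => J l = true).card = a+1
                then Gfn K (μ J) t else 0) := by
        rw [hFil, Finset.sum_filter]
      rw [hrw, ← Equiv.sum_comp (Fin.snocEquiv (fun _ : Fin (K+1) => Bool)),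
        Fintype.sum_prod_type, Fintype.sum_bool]
      have happ : ∀ (cb : Bool) (J' : Fin K → Bool),
          ((Fin.snocEquiv (fun _ : Fin (K+1) => Bool)) (cb, J'))
            = (Fin.snoc J' cb : Fin (K+1) → Bool) :=
        fun cb J' => funext fun x => by rw [Fin.snocEquiv_apply]
      have htrue : (∑ J' : Fin K → Bool,
          (if (Finset.univ.filter fun l =>
              (Fin.snocEquiv (fun _ : Fin (K+1) => Bool)) (true, J') l = true).card = a+1
            then Gfn K (μ ((Fin.snocEquiv (fun _ : Fin (K+1) => Bool)) (true, J'))) t else 0))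
          = Gfn a γp t * Gfn (b+1) γm t := by
        have hih := ih (a + (b+1)) (by omega) a (b+1) K (by omega) (by omega) γp γm t
        rw [hih, Finset.sum_filter]
        apply Finset.sum_congr rfl
        intro J' _
        rw [happ]
        have hcard : (Finset.univ.filter fun l =>
            (Fin.snoc J' true : Fin (K+1) → Bool) l = true).card
            = (Finset.univ.filter fun l => J' l = true).card + 1 := by
          rw [card_true_snoc]; simp
        rw [hcard]
        by_cases hca : (Finset.univ.filter fun l => J' l = true).card = a
        · rw [if_pos (by omega), if_pos hca]
          apply Gfn_congr
          intro j hj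
          simp only [hμ, Jplus_snoc J' true hj, Jminus_snoc J' true hj]
        · rw [if_neg (by omega), if_neg hca]
      have hfalse : (∑ J' : Fin K → Bool,
          (if (Finset.univ.filter fun l =>
              (Fin.snocEquiv (fun _ : Fin (K+1) => Bool)) (false, J') l = true).card = a+1
            then Gfn K (μ ((Fin.snocEquiv (fun _ : Fin (K+1) => Bool)) (false, J'))) t else 0))
          = Gfn (a+1) γp t * Gfn b γm t := by
        have hih := ih (a + 1 + b) (by omega) (a+1) b K rfl rfl γp γm t
        rw [hih, Finset.sum_filter]
        apply Finset.sum_congr rfl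
        intro J' _
        rw [happ]
        have hcard : (Finset.univ.filter fun l =>
            (Fin.snoc J' false : Fin (K+1) → Bool) l = true).card
            = (Finset.univ.filter fun l => J' l = true).card := by
          rw [card_true_snoc]; simp
        rw [hcard]
        by_cases hca : (Finset.univ.filter fun l => J' l = true).card = a+1
        · rw [if_pos hca, if_pos hca]
          apply Gfn_congr
          intro j hj
          simp only [hμ, Jplus_snoc J' false hj, Jminus_snoc J' false hj]
        · rw [if_neg hca, if_neg hca]
      rw [htrue, hfalse, hφdef]
    have hS' : ∀ t, HasDerivAt S (c * S t + φ t) t := by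
      intro t; rw [← hlow t]; exact hS t
    have h0 : P 0 = S 0 := by
      simp only [hPdef, hSdef]
      simp [Gfn_succ_zero]
    exact ode_unique hP hS' h0 t

lemma isClosed_simplexSet (N : ℕ) (t : ℝ) :
    IsClosed {s : Fin N → ℝ | (∀ i, 0 ≤ s i) ∧ ∑ i, s i ≤ t} := by
  have h : {s : Fin N → ℝ | (∀ i, 0 ≤ s i) ∧ ∑ i, s i ≤ t}
      = (⋂ i, {s : Fin N → ℝ | 0 ≤ s i}) ∩ {s | ∑ i, s i ≤ t} := by
    ext s; simp [Set.mem_iInter]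
  rw [h]
  exact (isClosed_iInter fun i => isClosed_le continuous_const (continuous_apply i)).inter
    (isClosed_le (by fun_prop) continuous_const)

lemma simplexInt_eq_Gfn (N : ℕ) (γ : ℕ → ℂ) : ∀ t : ℝ, 0 ≤ t →
    simplexInt N t (fun l => γ (l : ℕ)) = Gfn N γ t := by
  induction N with
  | zero =>
    intro t ht
    unfold simplexInt
    have hset : {s : Fin 0 → ℝ | (∀ i, 0 ≤ s i) ∧ ∑ i, s i ≤ t} = Set.univ := by
      ext s
      simp only [Set.mem_setOf_eq, Set.mem_univ, iff_true]
      exact ⟨fun i => i.elim0, by simpa using ht⟩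
    rw [hset, MeasureTheory.setIntegral_univ]
    simp only [Finset.univ_eq_empty, Finset.prod_empty, Finset.sum_empty, one_mul]
    rw [MeasureTheory.integral_const]
    have hvol : (volume : Measure (Fin 0 → ℝ)) Set.univ = 1 := by
      rw [volume_pi, MeasureTheory.Measure.pi_univ]
      simp
    rw [measureReal_def, hvol]
    simp only [ENNReal.toReal_one, one_smul, sub_zero]
    rfl
  | succ N IH =>
    intro t ht
    -- notation
    set A : Set (Fin (N+1) → ℝ) := {s | (∀ i, 0 ≤ s i) ∧ ∑ i, s i ≤ t} with hAdef
    set F : (Fin (N+1) → ℝ) → ℂ :=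
      fun s => (∏ i : Fin (N+1), Efn (γ (i : ℕ)) (s i)) * Efn (γ (N+1)) (t - ∑ i, s i)
      with hFdef
    have hA : MeasurableSet A := (isClosed_simplexSet (N+1) t).measurableSet
    have hstart : simplexInt (N+1) t (fun l => γ (l : ℕ)) = ∫ s, A.indicator F s := by
      rw [MeasureTheory.integral_indicator hA]
      rfl
    set B : Set (ℝ × (Fin N → ℝ)) :=
      {q | (0 ≤ q.1 ∧ ∀ i, 0 ≤ q.2 i) ∧ q.1 + ∑ i, q.2 i ≤ t} with hBdef
    set Fq : ℝ × (Fin N → ℝ) → ℂ :=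
      fun q => ((∏ i : Fin N, Efn (γ (i : ℕ)) (q.2 i)) * Efn (γ N) q.1)
        * Efn (γ (N+1)) (t - (q.1 + ∑ i, q.2 i)) with hFqdef
    have hBclosed : IsClosed B := by
      have h : B = ({x : ℝ | 0 ≤ x} ×ˢ (⋂ i, {s : Fin N → ℝ | 0 ≤ s i}))
          ∩ {q : ℝ × (Fin N → ℝ) | q.1 + ∑ i, q.2 i ≤ t} := by
        ext q; simp [hBdef, Set.mem_iInter, Set.mem_prod]
      rw [h]
      exact ((isClosed_le continuous_const continuous_id).prod
        (isClosed_iInter fun i => isClosed_le continuous_const (continuous_apply i))).inter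
        (isClosed_le (by fun_prop) continuous_const)
    have hBmeas : MeasurableSet B := hBclosed.measurableSet
    have hBcompact : IsCompact B := by
      apply IsCompact.of_isClosed_subset
        ((isCompact_Icc (a := (0:ℝ)) (b := t)).prod
          (isCompact_univ_pi (fun _ : Fin N => isCompact_Icc (a := (0:ℝ)) (b := t))))
        hBclosed
      rintro ⟨x, s'⟩ ⟨⟨hx, hs'⟩, hsum⟩
      have hsnn : 0 ≤ ∑ i, s' i := Finset.sum_nonneg fun i _ => hs' i
      constructor
      · exact ⟨hx, by linarith⟩
      · intro i _
        have : s' i ≤ ∑ j, s' j := Finset.single_le_sum (fun j _ => hs' j) (Finset.mem_univ i)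
        exact ⟨hs' i, by linarith⟩
    have hFqcont : Continuous Fq := by
      simp only [hFqdef]
      unfold Efn
      fun_prop
    have hIntB : Integrable (B.indicator Fq) (volume.prod volume) :=
      (hFqcont.continuousOn.integrableOn_compact hBcompact).integrable_indicator hBmeas
    -- step: change of variables via piFinSuccAbove
    have hstep1 : (∫ s, A.indicator F s) = ∫ p : ℝ × (Fin N → ℝ), B.indicator Fq p := by
      have hmp : MeasurePreserving
          (MeasurableEquiv.piFinSuccAbove (fun _ : Fin (N+1) => ℝ) (Fin.last N)) volume volume :=
        measurePreserving_piFinSuccAbove (fun _ => volume) (Fin.last N)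
      set e := MeasurableEquiv.piFinSuccAbove (fun _ : Fin (N+1) => ℝ) (Fin.last N) with he
      have h1 : (∫ p : ℝ × (Fin N → ℝ), (A.indicator F) (e.symm p)) = ∫ s, A.indicator F s :=
        (hmp.symm e).integral_comp e.symm.measurableEmbedding _
      rw [← h1]
      congr 1
      funext p
      have hsnoc : e.symm p = Fin.snoc p.2 p.1 := by
        simp [he, MeasurableEquiv.piFinSuccAbove, Fin.snocEquiv]
      rw [hsnoc]
      have hsum : ∑ i : Fin (N+1), (Fin.snoc p.2 p.1 : Fin (N+1) → ℝ) i = p.1 + ∑ i, p.2 i := by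
        rw [Fin.sum_univ_castSucc]
        simp [add_comm]
      have hmem : ((Fin.snoc p.2 p.1 : Fin (N+1) → ℝ) ∈ A) ↔ p ∈ B := by
        simp only [hAdef, hBdef, Set.mem_setOf_eq, hsum]
        constructor
        · rintro ⟨hpos, hle⟩
          refine ⟨⟨?_, fun i => ?_⟩, hle⟩
          · simpa using hpos (Fin.last N)
          · simpa using hpos i.castSucc
        · rintro ⟨⟨hx, hs'⟩, hle⟩
          refine ⟨fun i => ?_, hle⟩
          refine Fin.lastCases ?_ (fun j => ?_) i
          · simpa using hx
          · simpa using hs' j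
      by_cases hp : p ∈ B
      · rw [Set.indicator_of_mem (hmem.mpr hp), Set.indicator_of_mem hp]
        simp only [hFdef, hFqdef, hsum]
        rw [Fin.prod_univ_castSucc]
        simp
      · rw [Set.indicator_of_notMem (fun hc => hp (hmem.mp hc)),
          Set.indicator_of_notMem hp]
    set Ψ : (Fin N → ℝ) → ℝ → ℂ := fun s' u => B.indicator Fq (u - ∑ i, s' i, s') with hΨdef
    have hstep2 : (∫ p : ℝ × (Fin N → ℝ), B.indicator Fq p)
        = ∫ s' : Fin N → ℝ, ∫ x : ℝ, B.indicator Fq (x, s') := by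
      rw [Measure.volume_eq_prod]
      exact integral_prod_symm _ hIntB
    have hstep3 : (∫ s' : Fin N → ℝ, ∫ x : ℝ, B.indicator Fq (x, s'))
        = ∫ s' : Fin N → ℝ, ∫ u : ℝ, Ψ s' u := by
      refine integral_congr_ae (Filter.Eventually.of_forall fun s' => ?_)
      show (∫ x : ℝ, B.indicator Fq (x, s')) = ∫ u : ℝ, Ψ s' u
      have h1 : (∫ x : ℝ, B.indicator Fq (x, s')) = ∫ x : ℝ, Ψ s' (x + ∑ i, s' i) := by
        congr 1
        funext x
        simp only [hΨdef, add_sub_cancel_right]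
      rw [h1]
      exact integral_add_right_eq_self _ _
    set τ : (Fin N → ℝ) × ℝ → ℝ × (Fin N → ℝ) :=
      fun q => (q.2 - ∑ i, q.1 i, q.1) with hτdef
    have hτcont : Continuous τ := by
      simp only [hτdef]; fun_prop
    have huncurry : Function.uncurry Ψ = (τ ⁻¹' B).indicator (Fq ∘ τ) := by
      funext q
      rw [Set.indicator_comp_right]
      rfl
    have hCclosed : IsClosed (τ ⁻¹' B) := hBclosed.preimage hτcont
    have hCcompact : IsCompact (τ ⁻¹' B) := by
      apply IsCompact.of_isClosed_subset
        ((isCompact_univ_pi (fun _ : Fin N => isCompact_Icc (a := (0:ℝ)) (b := t))).prod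
          (isCompact_Icc (a := (0:ℝ)) (b := t)))
        hCclosed
      rintro ⟨s', x⟩ ⟨⟨h1, h2⟩, h3⟩
      have hsnn : 0 ≤ ∑ i, s' i := Finset.sum_nonneg fun i _ => h2 i
      constructor
      · intro i _
        have : s' i ≤ ∑ j, s' j := Finset.single_le_sum (fun j _ => h2 j) (Finset.mem_univ i)
        simp only [Set.mem_Icc]
        constructor
        · exact h2 i
        · simp only [hτdef] at h1 h3
          linarith
      · simp only [hτdef] at h1 h3
        simp only [Set.mem_Icc]
        constructor <;> linarith
    have hIntC : Integrable (Function.uncurry Ψ) (volume.prod volume) := by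
      rw [huncurry]
      exact ((hFqcont.comp hτcont).continuousOn.integrableOn_compact hCcompact).integrable_indicator
        (hBmeas.preimage hτcont.measurable)
    have hstep4 : (∫ s' : Fin N → ℝ, ∫ u : ℝ, Ψ s' u) = ∫ u : ℝ, ∫ s' : Fin N → ℝ, Ψ s' u := by
      exact integral_integral_swap hIntC
    have hinner : ∀ u : ℝ, (∫ s' : Fin N → ℝ, Ψ s' u)
        = Set.indicator (Set.Icc 0 t) (fun v => Efn (γ (N+1)) (t - v) * Gfn N γ v) u := by
      intro u
      by_cases hu : u ∈ Set.Icc (0:ℝ) t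
      · obtain ⟨hu0, hut⟩ := hu
        rw [Set.indicator_of_mem (Set.mem_Icc.mpr ⟨hu0, hut⟩)]
        set A0 : Set (Fin N → ℝ) := {s' | (∀ i, 0 ≤ s' i) ∧ ∑ i, s' i ≤ u} with hA0def
        have hA0 : MeasurableSet A0 := (isClosed_simplexSet N u).measurableSet
        have hψ : ∀ s', Ψ s' u = A0.indicator
            (fun s' => Efn (γ (N+1)) (t - u)
              * ((∏ i : Fin N, Efn (γ (i:ℕ)) (s' i)) * Efn (γ N) (u - ∑ i, s' i))) s' := by
          intro s'
          have hmem : ((u - ∑ i, s' i, s') ∈ B) ↔ s' ∈ A0 := by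
            simp only [hBdef, hA0def, Set.mem_setOf_eq]
            constructor
            · rintro ⟨⟨h1, h2⟩, h3⟩
              exact ⟨h2, by linarith⟩
            · rintro ⟨h1, h2⟩
              have hsnn : 0 ≤ ∑ i, s' i := Finset.sum_nonneg fun i _ => h1 i
              exact ⟨⟨by linarith, h1⟩, by linarith⟩
          by_cases hs : s' ∈ A0
          · show B.indicator Fq (u - ∑ i, s' i, s') = _
            rw [Set.indicator_of_mem (hmem.mpr hs), Set.indicator_of_mem hs]
            simp only [hFqdef]
            have harg : t - ((u - ∑ i, s' i) + ∑ i, s' i) = t - u := by ring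
            rw [harg]
            ring
          · show B.indicator Fq (u - ∑ i, s' i, s') = _
            rw [Set.indicator_of_notMem (fun hc => hs (hmem.mp hc)),
              Set.indicator_of_notMem hs]
        calc (∫ s' : Fin N → ℝ, Ψ s' u)
            = ∫ s' : Fin N → ℝ, A0.indicator
              (fun s' => Efn (γ (N+1)) (t - u)
                * ((∏ i : Fin N, Efn (γ (i:ℕ)) (s' i)) * Efn (γ N) (u - ∑ i, s' i))) s' :=
              integral_congr_ae (Filter.Eventually.of_forall hψ)
          _ = ∫ s' in A0, Efn (γ (N+1)) (t - u)
                * ((∏ i : Fin N, Efn (γ (i:ℕ)) (s' i)) * Efn (γ N) (u - ∑ i, s' i)) :=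
              integral_indicator hA0
          _ = Efn (γ (N+1)) (t - u)
                * ∫ s' in A0, (∏ i : Fin N, Efn (γ (i:ℕ)) (s' i)) * Efn (γ N) (u - ∑ i, s' i) :=
              integral_const_mul _ _
          _ = Efn (γ (N+1)) (t - u) * Gfn N γ u := by
              rw [← IH u hu0]
              rfl
      · rw [Set.indicator_of_notMem hu]
        have hzero : ∀ s' : Fin N → ℝ, Ψ s' u = 0 := by
          intro s'
          apply Set.indicator_of_notMem
          rintro ⟨⟨h1, h2⟩, h3⟩
          dsimp only at h1 h2 h3
          have hsnn : 0 ≤ ∑ i, s' i := Finset.sum_nonneg fun i _ => h2 i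
          exact hu (Set.mem_Icc.mpr ⟨by linarith, by linarith⟩)
        calc (∫ s' : Fin N → ℝ, Ψ s' u)
            = ∫ _ : Fin N → ℝ, (0:ℂ) := integral_congr_ae (Filter.Eventually.of_forall hzero)
          _ = 0 := integral_zero _ _
    rw [hstart, hstep1, hstep2, hstep3, hstep4,
      integral_congr_ae (Filter.Eventually.of_forall hinner),
      integral_indicator measurableSet_Icc, integral_Icc_eq_integral_Ioc,
      ← intervalIntegral.integral_of_le ht]
    rfl

/-- interlacing of Duhamel expansions.  The product of two time-simplex
integrals over `[0,t]` with phases `γ⁺₀,…,γ⁺ₙ` and `γ⁻₀,…,γ⁻ₙ'` equals the sum over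
all maps `J : {1,…,n+n'} → {±1}` interlacing `(n,n')` (i.e. with exactly `n` values
`+1`) of the time-simplex integral with `n+n'+1` variables and phases
`γ⁺_{J₊(j;J)} + γ⁻_{J₋(j;J)}`. -/
theorem stmt_7 (n n' : ℕ) (t : ℝ) (ht : 0 < t) (γp γm : ℕ → ℂ) :
    simplexInt n t (fun l => γp (l : ℕ)) * simplexInt n' t (fun l => γm (l : ℕ))
      = ∑ J ∈ Finset.univ.filter
            (fun J : Fin (n + n') → Bool =>
              (Finset.univ.filter fun l => J l = true).card = n),
          simplexInt (n + n') t
            (fun j => γp (Jplus J (j : ℕ)) + γm (Jminus J (j : ℕ))) := by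
  rw [simplexInt_eq_Gfn n γp t ht.le, simplexInt_eq_Gfn n' γm t ht.le,
    main_lemma (n + n') n n' (n + n') rfl rfl γp γm t]
  exact Finset.sum_congr rfl fun J _ =>
    (simplexInt_eq_Gfn (n + n') (fun j => γp (Jplus J j) + γm (Jminus J j)) t ht.le).symm
end

section
/- Consider a relevant momentum graph (one whose amplitude is nonzero) built via the iterative cluster scheme, with $N = n + n'$ interaction vertices of which $n_j$ have degree $j \in \{0,1,2\}$, and cluster decomposition $S$ with all clusters of even size. Set $r = N + 1 - |S|$. Then: (i) $n_2 - n_0 = r$; (ii) $n_0 = \frac{1}{2}(N - r - n_1)$; (iii) $0 \le n_0 \le \lfloor (N-r)/2 \rfloor$; (iv) the number $n_{np}$ of clusters of size greater than 2 satisfies $n_{np} \le r \le N$; and (v) $r = 0$ if and only if $S$ is a pairing (all clusters have size 2). -/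
open Finset

/-- identities of the iterative cluster scheme.  A relevant momentum graph
with `N = n + n'` interaction vertices of degrees `deg j ∈ {0,1,2}` and cluster
decomposition `S` (a multiset of even positive cluster sizes with total size `2N+2`) is
processed bottom-to-top: at step `j` a sub-multiset `t` of the current cluster sizes with
`|t| = 3 - deg j` clusters (jointly containing the three fused edges, so `t.sum ≥ 3`) is
merged into a single cluster of size `t.sum - 2`; at the top a single cluster of size `2`
remains.  Writing `n_i` for the number of vertices of degree `i` and
`r = N + 1 - |S|`, one has: (i) `n₂ - n₀ = r`; (ii) `2n₀ = N - r - n₁`;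
(iii) `2n₀ ≤ N - r` (i.e. `n₀ ≤ ⌊(N-r)/2⌋`); (iv) `n_np ≤ r ≤ N`, where `n_np` is the
number of clusters of size `> 2`; (v) `r = 0` iff `S` is a pairing. -/
theorem stmt_13 (N : ℕ) (S : Multiset ℕ)
    (hSeven : ∀ a ∈ S, Even a) (hSpos : ∀ a ∈ S, 0 < a)
    (hSsum : S.sum = 2 * N + 2)
    (deg : Fin N → ℕ) (hdeg : ∀ j, deg j ≤ 2)
    (ms : ℕ → Multiset ℕ) (hms0 : ms 0 = S) (hmsN : ms N = {2})
    (hstep : ∀ j : Fin N, ∃ t : Multiset ℕ,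
      t ≤ ms (j : ℕ) ∧ t.card = 3 - deg j ∧ 3 ≤ t.sum ∧
      ms ((j : ℕ) + 1) = (ms (j : ℕ) - t) + {t.sum - 2}) :
    ((univ.filter fun j => deg j = 2).card : ℤ) - ((univ.filter fun j => deg j = 0).card : ℤ)
        = (N : ℤ) + 1 - (S.card : ℤ)
    ∧ 2 * ((univ.filter fun j => deg j = 0).card : ℤ)
        = (N : ℤ) - ((N : ℤ) + 1 - (S.card : ℤ)) - ((univ.filter fun j => deg j = 1).card : ℤ)
    ∧ 2 * ((univ.filter fun j => deg j = 0).card : ℤ) ≤ (N : ℤ) - ((N : ℤ) + 1 - (S.card : ℤ))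
    ∧ ((S.filter fun a => 2 < a).card : ℤ) ≤ (N : ℤ) + 1 - (S.card : ℤ)
    ∧ (N : ℤ) + 1 - (S.card : ℤ) ≤ (N : ℤ)
    ∧ ((N : ℤ) + 1 - (S.card : ℤ) = 0 ↔ ∀ a ∈ S, a = 2) := by
  classical
  -- card recursion along the dynamics
  have key : ∀ k, k ≤ N → ((ms k).card : ℤ) + 2 * k
      = (S.card : ℤ) + ∑ j ∈ Finset.range k, (if h : j < N then (deg ⟨j, h⟩ : ℤ) else 0) := by
    intro k
    induction k with
    | zero => intro _; simp [hms0]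
    | succ k ih =>
      intro hk
      have hk' : k < N := hk
      obtain ⟨t, ht_le, ht_card, ht_sum, ht_eq⟩ := hstep ⟨k, hk'⟩
      have hck : t.card ≤ (ms k).card := Multiset.card_le_card ht_le
      have hcard : (ms (k + 1)).card = (ms k).card - t.card + 1 := by
        rw [ht_eq, Multiset.card_add, Multiset.card_sub ht_le]
        simp
      have hdk := hdeg ⟨k, hk'⟩
      have ihk := ih (le_of_lt hk')
      rw [Finset.sum_range_succ, dif_pos hk']
      omega
  have hkeyN := key N le_rfl
  rw [hmsN] at hkeyN
  have hsum_eq : (∑ j ∈ Finset.range N, (if h : j < N then (deg ⟨j, h⟩ : ℤ) else 0))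
      = ∑ j : Fin N, (deg j : ℤ) := by
    rw [← Fin.sum_univ_eq_sum_range]
    apply Finset.sum_congr rfl
    intro j _
    simp [j.isLt]
  rw [hsum_eq] at hkeyN
  simp only [Multiset.card_singleton] at hkeyN
  -- counting identities
  have hE1 : ∑ j : Fin N, (deg j : ℤ)
      = ((univ.filter fun j => deg j = 1).card : ℤ)
        + 2 * ((univ.filter fun j => deg j = 2).card : ℤ) := by
    have h1 : ∀ j : Fin N, (deg j : ℤ)
        = (if deg j = 1 then (1:ℤ) else 0) + 2 * (if deg j = 2 then (1:ℤ) else 0) := by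
      intro j
      have := hdeg j
      split_ifs <;> omega
    rw [Finset.sum_congr rfl fun j _ => h1 j, Finset.sum_add_distrib, ← Finset.mul_sum,
      Finset.sum_boole, Finset.sum_boole]
  have hE2 : (N : ℤ) = ((univ.filter fun j => deg j = 0).card : ℤ)
      + ((univ.filter fun j => deg j = 1).card : ℤ)
      + ((univ.filter fun j => deg j = 2).card : ℤ) := by
    have h1 : ∀ j : Fin N, (1:ℤ)
        = (if deg j = 0 then (1:ℤ) else 0) + (if deg j = 1 then (1:ℤ) else 0)
          + (if deg j = 2 then (1:ℤ) else 0) := by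
      intro j
      have := hdeg j
      split_ifs <;> omega
    have h2 : (N : ℤ) = ∑ _j : Fin N, (1:ℤ) := by simp
    rw [h2, Finset.sum_congr rfl fun j _ => h1 j, Finset.sum_add_distrib,
      Finset.sum_add_distrib, Finset.sum_boole, Finset.sum_boole, Finset.sum_boole]
  rw [hE1] at hkeyN
  -- S facts
  have hScard_pos : 0 < S.card := by
    rcases Nat.eq_zero_or_pos S.card with h | h
    · rw [Multiset.card_eq_zero] at h
      rw [h] at hSsum; simp at hSsum
    · exact h
  -- lower bound on the sum of S
  have hsum_lb : 2 * S.card + 2 * (S.filter fun a => 2 < a).card ≤ S.sum := by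
    have hsplit : S.filter (fun a => 2 < a) + S.filter (fun a => ¬ 2 < a) = S :=
      Multiset.filter_add_not _ S
    have h1 : (S.filter fun a => 2 < a).card • 4 ≤ (S.filter fun a => 2 < a).sum := by
      apply Multiset.card_nsmul_le_sum
      intro x hx
      obtain ⟨hx1, hx2⟩ := Multiset.mem_filter.mp hx
      obtain ⟨b, hb⟩ := hSeven x hx1
      omega
    have h2 : (S.filter fun a => ¬ 2 < a).card • 2 ≤ (S.filter fun a => ¬ 2 < a).sum := by
      apply Multiset.card_nsmul_le_sum
      intro x hx
      obtain ⟨hx1, hx2⟩ := Multiset.mem_filter.mp hx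
      obtain ⟨b, hb⟩ := hSeven x hx1
      have := hSpos x hx1
      omega
    have h3 : (S.filter fun a => 2 < a).card + (S.filter fun a => ¬ 2 < a).card = S.card := by
      rw [← Multiset.card_add, hsplit]
    have h4 : (S.filter fun a => 2 < a).sum + (S.filter fun a => ¬ 2 < a).sum = S.sum := by
      rw [← Multiset.sum_add, hsplit]
    simp only [smul_eq_mul] at h1 h2
    omega
  refine ⟨by omega, by omega, by omega, by omega, by omega, ?_⟩
  constructor
  · intro hr a ha
    have hnp : (S.filter fun a => 2 < a).card = 0 := by omega
    have hnotin : ¬ (2 < a) := by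
      intro h
      have hmem : a ∈ S.filter (fun a => 2 < a) := Multiset.mem_filter.mpr ⟨ha, h⟩
      rw [Multiset.card_eq_zero.mp hnp] at hmem
      simp at hmem
    obtain ⟨b, hb⟩ := hSeven a ha
    have := hSpos a ha
    omega
  · intro h2
    have hrep : S = Multiset.replicate S.card 2 := Multiset.eq_replicate_card.mpr h2
    have hs2 : S.sum = S.card * 2 := by
      rw [hrep]; simp [Multiset.sum_replicate, mul_comm]
    omega
end

section
/- Let $0 < \lambda < 1$, let $a_0 > 0$, and define $N_0(\lambda) = \max\big(1, \lfloor a_0|\ln\lambda| / \ln\langle\ln\lambda\rangle \rfloor\big)$ where $\langle x\rangle = \sqrt{1+x^2}$. Then as $\lambda \to 0^+$: (i) $N_0(\lambda) \to \infty$; (ii) $N_0 \ln\langle\ln\lambda\rangle / |\ln\lambda| \to a_0$; (iii) $N_0 \ln N_0 / |\ln\lambda| \to a_0$. Consequently, for constants $c, c' \ge 0$, $n_1, n_2, n_3 \in \mathbb{N}$, $p_1, p_2 \in \mathbb{R}$ satisfying $p_1 - a_0(p_2 + n_1 n_2 + n_3) > 0$, the expression $c^{N_0}\,\lambda^{p_1}\,N_0^{p_2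 N_0 + c'}\,((n_1 N_0)!)^{n_2}\,\langle\ln\lambda\rangle^{n_3 N_0 + c'}$ tends to $0$ as $\lambda \to 0^+$. -/
open Filter
open scoped Topology

/-- The Japanese bracket `⟨x⟩ = √(1+x²)`. -/
noncomputable def jbr (x : ℝ) : ℝ := Real.sqrt (1 + x ^ 2)

lemma jbr_abs (x : ℝ) : jbr |x| = jbr x := by simp [jbr, sq_abs]

lemma one_le_jbr (x : ℝ) : 1 ≤ jbr x := by
  unfold jbr
  nlinarith [Real.sq_sqrt (show (0:ℝ) ≤ 1 + x ^ 2 by positivity),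
    Real.sqrt_nonneg (1 + x ^ 2), sq_nonneg x]

lemma jbr_pos (x : ℝ) : 0 < jbr x := lt_of_lt_of_le one_pos (one_le_jbr x)

lemma le_jbr (x : ℝ) : x ≤ jbr x := by
  have h1 : x ≤ |x| := le_abs_self x
  have h2 : |x| = Real.sqrt (x ^ 2) := by rw [Real.sqrt_sq_eq_abs]
  have h3 : Real.sqrt (x ^ 2) ≤ jbr x :=
    Real.sqrt_le_sqrt (by nlinarith)
  linarith [h2 ▸ h1]

lemma jbr_le_two_mul (x : ℝ) (hx : 1 ≤ x) : jbr x ≤ 2 * x := by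
  have h : jbr x ≤ Real.sqrt ((2 * x) ^ 2) := Real.sqrt_le_sqrt (by nlinarith)
  rwa [Real.sqrt_sq (by positivity)] at h

/-- `φ(t) = a₀ t / log⟨t⟩`. -/
noncomputable def phiA (a0 t : ℝ) : ℝ := a0 * t / Real.log (jbr t)

/-- `N₀` as a function of `t = |log λ|`, real-valued. -/
noncomputable def nnR (a0 t : ℝ) : ℝ := ((max 1 (⌊phiA a0 t⌋.toNat) : ℕ) : ℝ)

lemma one_le_nnR (a0 t : ℝ) : 1 ≤ nnR a0 t := by
  have : (1 : ℕ) ≤ max 1 (⌊phiA a0 t⌋.toNat) := le_max_left _ _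
  unfold nnR
  exact_mod_cast this

lemma jbr_tendsto : Tendsto jbr atTop atTop :=
  tendsto_atTop_mono le_jbr tendsto_id

lemma log_jbr_tendsto : Tendsto (fun t => Real.log (jbr t)) atTop atTop :=
  Real.tendsto_log_atTop.comp jbr_tendsto

lemma log_jbr_div_tendsto : Tendsto (fun t => Real.log (jbr t) / t) atTop (𝓝 0) := by
  have hupper : Tendsto (fun t : ℝ => (Real.log 2 + Real.log t) / t) atTop (𝓝 0) := by
    have h1 : Tendsto (fun t : ℝ => Real.log 2 / t) atTop (𝓝 0) :=
      tendsto_const_nhds.div_atTop tendsto_id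
    have h2 : Tendsto (fun t : ℝ => Real.log t / t) atTop (𝓝 0) :=
      Real.isLittleO_log_id_atTop.tendsto_div_nhds_zero
    have := h1.add h2
    simpa [add_div] using this
  apply tendsto_of_tendsto_of_tendsto_of_le_of_le' tendsto_const_nhds hupper
  · filter_upwards [eventually_ge_atTop (1:ℝ)] with t ht
    have : (1:ℝ) ≤ jbr t := one_le_jbr t
    have := Real.log_nonneg this
    positivity
  · filter_upwards [eventually_ge_atTop (1:ℝ)] with t ht
    have ht0 : (0:ℝ) < t := by linarith
    have h1 : Real.log (jbr t) ≤ Real.log (2 * t) :=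
      Real.log_le_log (jbr_pos t) (jbr_le_two_mul t ht)
    rw [Real.log_mul (by norm_num) (ne_of_gt ht0)] at h1
    gcongr

section
variable {a0 : ℝ} (ha0 : 0 < a0)
include ha0

lemma phiA_tendsto : Tendsto (phiA a0) atTop atTop := by
  have h1 : Tendsto (fun t => Real.log (jbr t) / t) atTop (𝓝[>] (0:ℝ)) := by
    rw [tendsto_nhdsWithin_iff]
    refine ⟨log_jbr_div_tendsto, ?_⟩
    filter_upwards [eventually_gt_atTop (1:ℝ)] with t ht
    have hj : 1 < jbr t := lt_of_lt_of_le ht (le_jbr t)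
    have hl : 0 < Real.log (jbr t) := Real.log_pos hj
    exact div_pos hl (by linarith)
  have h2 : Tendsto (fun t => (Real.log (jbr t) / t)⁻¹) atTop atTop :=
    tendsto_inv_nhdsGT_zero.comp h1
  have h3 := h2.const_mul_atTop ha0
  apply h3.congr'
  filter_upwards [eventually_gt_atTop (1:ℝ)] with t ht
  have ht0 : t ≠ 0 := by linarith
  have hl : Real.log (jbr t) ≠ 0 := ne_of_gt (Real.log_pos (lt_of_lt_of_le ht (le_jbr t)))
  unfold phiA
  field_simp

lemma nnR_ev : ∀ᶠ t in atTop, nnR a0 t = ((⌊phiA a0 t⌋ : ℤ) : ℝ)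
    ∧ phiA a0 t - 1 < nnR a0 t ∧ nnR a0 t ≤ phiA a0 t := by
  filter_upwards [(phiA_tendsto ha0).eventually_ge_atTop 1] with t ht
  have hfl : (1 : ℤ) ≤ ⌊phiA a0 t⌋ := Int.le_floor.mpr (by exact_mod_cast ht)
  have htn : (1 : ℕ) ≤ ⌊phiA a0 t⌋.toNat := by omega
  have hmax : max 1 (⌊phiA a0 t⌋.toNat) = ⌊phiA a0 t⌋.toNat := max_eq_right htn
  have hcast : nnR a0 t = ((⌊phiA a0 t⌋ : ℤ) : ℝ) := by
    unfold nnR; rw [hmax]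
    exact_mod_cast congrArg (fun z : ℤ => (z : ℝ)) (Int.toNat_of_nonneg (by omega))
  refine ⟨hcast, ?_, ?_⟩
  · rw [hcast]; linarith [Int.lt_floor_add_one (phiA a0 t)]
  · rw [hcast]; exact Int.floor_le _

lemma nnR_div_phiA : Tendsto (fun t => nnR a0 t / phiA a0 t) atTop (𝓝 1) := by
  have hphi := phiA_tendsto ha0
  have hinv : Tendsto (fun t => 1 - 1 / phiA a0 t) atTop (𝓝 1) := by
    have := (tendsto_const_nhds (x := (1:ℝ))).div_atTop hphi
    simpa using (tendsto_const_nhds (x := (1:ℝ))).sub this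
  apply tendsto_of_tendsto_of_tendsto_of_le_of_le' hinv tendsto_const_nhds
  · filter_upwards [nnR_ev ha0, hphi.eventually_ge_atTop 1] with t h hp
    have hp0 : (0:ℝ) < phiA a0 t := by linarith
    rw [one_sub_div (ne_of_gt hp0)]
    gcongr
    linarith [h.2.1]
  · filter_upwards [nnR_ev ha0, hphi.eventually_ge_atTop 1] with t h hp
    have hp0 : (0:ℝ) < phiA a0 t := by linarith
    exact (div_le_one hp0).mpr h.2.2

lemma nnR_tendsto : Tendsto (nnR a0) atTop atTop := by
  have h : Tendsto (fun t => phiA a0 t - 1) atTop atTop :=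
    tendsto_atTop_add_const_right _ (-1) (phiA_tendsto ha0)
  apply tendsto_atTop_mono' _ _ h
  filter_upwards [nnR_ev ha0] with t ht
  linarith [ht.2.1]

lemma nnR_mul_log_jbr_div : Tendsto (fun t => nnR a0 t * Real.log (jbr t) / t) atTop (𝓝 a0) := by
  have h := (nnR_div_phiA ha0).mul (tendsto_const_nhds (x := a0))
  rw [one_mul] at h
  apply h.congr'
  filter_upwards [eventually_gt_atTop (1:ℝ)] with t ht
  have ht0 : t ≠ 0 := by linarith
  have hl : Real.log (jbr t) ≠ 0 := ne_of_gt (Real.log_pos (lt_of_lt_of_le ht (le_jbr t)))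
  have ha0' : a0 ≠ 0 := ne_of_gt ha0
  unfold phiA
  field_simp

end

lemma log_div_log_jbr : Tendsto (fun t => Real.log t / Real.log (jbr t)) atTop (𝓝 1) := by
  have hlow : Tendsto (fun t : ℝ => Real.log t / (Real.log t + Real.log 2)) atTop (𝓝 1) := by
    have haux : Tendsto (fun s : ℝ => s / (s + Real.log 2)) atTop (𝓝 1) := by
      have h1 : Tendsto (fun s : ℝ => Real.log 2 / (s + Real.log 2)) atTop (𝓝 0) :=
        tendsto_const_nhds.div_atTop (tendsto_atTop_add_const_right _ _ tendsto_id)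
      have h2 := (tendsto_const_nhds (x := (1:ℝ))).sub h1
      rw [sub_zero] at h2
      apply h2.congr'
      filter_upwards [eventually_gt_atTop (|Real.log 2| + 1)] with s hs
      have : s + Real.log 2 ≠ 0 := by
        have := abs_nonneg (Real.log 2); have := neg_abs_le (Real.log 2); nlinarith
      field_simp
      ring
    exact haux.comp Real.tendsto_log_atTop
  apply tendsto_of_tendsto_of_tendsto_of_le_of_le' hlow tendsto_const_nhds
  · filter_upwards [eventually_gt_atTop (1:ℝ)] with t ht
    have hlt : 0 < Real.log t := Real.log_pos ht
    have hub : Real.log (jbr t) ≤ Real.log t + Real.log 2 := by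
      have h1 : Real.log (jbr t) ≤ Real.log (2 * t) :=
        Real.log_le_log (jbr_pos t) (jbr_le_two_mul t ht.le)
      rw [Real.log_mul (by norm_num) (by linarith)] at h1
      linarith
    have hpos : 0 < Real.log (jbr t) := Real.log_pos (lt_of_lt_of_le ht (le_jbr t))
    gcongr
  · filter_upwards [eventually_gt_atTop (1:ℝ)] with t ht
    have hpos : 0 < Real.log (jbr t) := Real.log_pos (lt_of_lt_of_le ht (le_jbr t))
    rw [div_le_one hpos]
    exact Real.log_le_log (by linarith) (le_jbr t)

lemma loglog_div_log_jbr : Tendsto (fun t => Real.log (Real.log (jbr t)) / Real.log (jbr t))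
    atTop (𝓝 0) :=
  Real.isLittleO_log_id_atTop.tendsto_div_nhds_zero.comp log_jbr_tendsto

section
variable {a0 : ℝ} (ha0 : 0 < a0)
include ha0

lemma log_nnR_div_log_jbr :
    Tendsto (fun t => Real.log (nnR a0 t) / Real.log (jbr t)) atTop (𝓝 1) := by
  have hratio : Tendsto (fun t => Real.log (nnR a0 t / phiA a0 t) / Real.log (jbr t))
      atTop (𝓝 0) := by
    have h1 : Tendsto (fun t => Real.log (nnR a0 t / phiA a0 t)) atTop (𝓝 0) := by
      have := (Real.continuousAt_log one_ne_zero).tendsto.comp (nnR_div_phiA ha0)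
      simpa [Function.comp_def] using this
    exact h1.div_atTop log_jbr_tendsto
  have hla0 : Tendsto (fun t => Real.log a0 / Real.log (jbr t)) atTop (𝓝 0) :=
    tendsto_const_nhds.div_atTop log_jbr_tendsto
  have hcomb := ((hla0.add log_div_log_jbr).sub loglog_div_log_jbr).add hratio
  norm_num at hcomb
  apply hcomb.congr'
  filter_upwards [eventually_gt_atTop (1:ℝ), nnR_ev ha0,
    (phiA_tendsto ha0).eventually_ge_atTop 1] with t ht hev hp
  have ht0 : (0:ℝ) < t := by linarith
  have hj : 0 < Real.log (jbr t) := Real.log_pos (lt_of_lt_of_le ht (le_jbr t))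
  have hp0 : (0:ℝ) < phiA a0 t := by linarith
  have hn0 : (0:ℝ) < nnR a0 t := by linarith [one_le_nnR a0 t]
  have hlogphi : Real.log (phiA a0 t) =
      Real.log a0 + Real.log t - Real.log (Real.log (jbr t)) := by
    unfold phiA
    rw [Real.log_div (by positivity) (ne_of_gt hj), Real.log_mul (ne_of_gt ha0) (ne_of_gt ht0)]
  have hlognn : Real.log (nnR a0 t) =
      Real.log (phiA a0 t) + Real.log (nnR a0 t / phiA a0 t) := by
    rw [Real.log_div (ne_of_gt hn0) (ne_of_gt hp0)]; ring
  rw [hlognn, hlogphi]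
  field_simp
  try ring

lemma nnR_mul_log_nnR_div : Tendsto (fun t => nnR a0 t * Real.log (nnR a0 t) / t)
    atTop (𝓝 a0) := by
  have h := (nnR_mul_log_jbr_div ha0).mul (log_nnR_div_log_jbr ha0)
  rw [mul_one] at h
  apply h.congr'
  filter_upwards [eventually_gt_atTop (1:ℝ)] with t ht
  have ht0 : t ≠ 0 := by linarith
  have hj : Real.log (jbr t) ≠ 0 := ne_of_gt (Real.log_pos (lt_of_lt_of_le ht (le_jbr t)))
  field_simp
  try ring

lemma nnR_div_t : Tendsto (fun t => nnR a0 t / t) atTop (𝓝 0) := by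
  have h := (nnR_mul_log_jbr_div ha0).div_atTop log_jbr_tendsto
  apply h.congr'
  filter_upwards [eventually_gt_atTop (1:ℝ)] with t ht
  have ht0 : t ≠ 0 := by linarith
  have hj : Real.log (jbr t) ≠ 0 := ne_of_gt (Real.log_pos (lt_of_lt_of_le ht (le_jbr t)))
  field_simp
  try ring

lemma log_nnR_div_t : Tendsto (fun t => Real.log (nnR a0 t) / t) atTop (𝓝 0) := by
  have hinv : Tendsto (fun t => (nnR a0 t)⁻¹) atTop (𝓝 0) :=
    (nnR_tendsto ha0).inv_tendsto_atTop
  have h := (nnR_mul_log_nnR_div ha0).mul hinv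
  rw [mul_zero] at h
  apply h.congr'
  filter_upwards [eventually_gt_atTop (1:ℝ)] with t ht
  have hn0 : nnR a0 t ≠ 0 := by have := one_le_nnR a0 t; linarith
  field_simp
  try ring

end

lemma cast_pow_self_eq (m : ℕ) : ((m : ℝ)) ^ m = Real.exp (Real.log m * m) := by
  rcases Nat.eq_zero_or_pos m with h | h
  · subst h; simp
  · rw [← Real.rpow_natCast, Real.rpow_def_of_pos (by exact_mod_cast h)]

section
variable {a0 : ℝ} (ha0 : 0 < a0)
include ha0

lemma final_atTop (c c' : ℝ) (n1 n2 n3 : ℕ) (p1 p2 : ℝ) (hc : 0 < c) (hc' : 0 ≤ c')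
    (hp : 0 < p1 - a0 * (p2 + (n1 : ℝ) * (n2 : ℝ) + (n3 : ℝ))) :
    Tendsto (fun t =>
        c ^ (max 1 (⌊phiA a0 t⌋.toNat)) * (Real.exp (-t)) ^ p1 *
          (nnR a0 t) ^ (p2 * nnR a0 t + c') *
          ((Nat.factorial (n1 * max 1 (⌊phiA a0 t⌋.toNat)) : ℝ)) ^ n2 *
          (jbr t) ^ ((n3 : ℝ) * nnR a0 t + c'))
      atTop (𝓝 0) := by
  set G : ℝ → ℝ := fun t =>
    Real.log c * nnR a0 t + (-t) * p1 + Real.log (nnR a0 t) * (p2 * nnR a0 t + c') +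
      (n2 : ℝ) * (Real.log ((n1 : ℝ) * nnR a0 t) * ((n1 : ℝ) * nnR a0 t)) +
      Real.log (jbr t) * ((n3 : ℝ) * nnR a0 t + c') with hGdef
  -- the limit L of G t / t
  set L : ℝ := -p1 + p2 * a0 + (n2 : ℝ) * ((n1 : ℝ) * a0) + (n3 : ℝ) * a0 with hLdef
  have hA := nnR_div_t ha0
  have hB := nnR_mul_log_nnR_div ha0
  have hC := nnR_mul_log_jbr_div ha0
  have hD := log_nnR_div_t ha0
  have hE5 := log_jbr_div_tendsto
  have hR : Tendsto (fun t =>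
      Real.log c * (nnR a0 t / t) + (-p1) +
        (p2 * (nnR a0 t * Real.log (nnR a0 t) / t) + c' * (Real.log (nnR a0 t) / t)) +
        (n2 : ℝ) * (Real.log (n1 : ℝ) * (n1 : ℝ) * (nnR a0 t / t) +
          (n1 : ℝ) * (nnR a0 t * Real.log (nnR a0 t) / t)) +
        ((n3 : ℝ) * (nnR a0 t * Real.log (jbr t) / t) + c' * (Real.log (jbr t) / t)))
      atTop (𝓝 (Real.log c * 0 + (-p1) + (p2 * a0 + c' * 0) +
        (n2 : ℝ) * (Real.log (n1 : ℝ) * (n1 : ℝ) * 0 + (n1 : ℝ) * a0) +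
        ((n3 : ℝ) * a0 + c' * 0))) := by
    exact ((((tendsto_const_nhds.mul hA).add tendsto_const_nhds).add
      ((tendsto_const_nhds.mul hB).add (tendsto_const_nhds.mul hD))).add
      (tendsto_const_nhds.mul ((tendsto_const_nhds.mul hA).add
        (tendsto_const_nhds.mul hB)))).add
      ((tendsto_const_nhds.mul hC).add (tendsto_const_nhds.mul hE5))
  have hval : Real.log c * 0 + (-p1) + (p2 * a0 + c' * 0) +
      (n2 : ℝ) * (Real.log (n1 : ℝ) * (n1 : ℝ) * 0 + (n1 : ℝ) * a0) +
      ((n3 : ℝ) * a0 + c' * 0) = L := by rw [hLdef]; ring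
  rw [hval] at hR
  have hGdiv : Tendsto (fun t => G t / t) atTop (𝓝 L) := by
    apply hR.congr'
    filter_upwards [eventually_gt_atTop (1:ℝ)] with t ht
    have ht0 : t ≠ 0 := by linarith
    have hn1 : (1:ℝ) ≤ nnR a0 t := one_le_nnR a0 t
    have hn0 : nnR a0 t ≠ 0 := by linarith
    rcases Nat.eq_zero_or_pos n1 with h1 | h1
    · subst h1
      simp only [Nat.cast_zero, zero_mul, Real.log_zero, mul_zero, add_zero, zero_add]
      rw [hGdef]
      field_simp
      ring
    · have hne : (n1 : ℝ) ≠ 0 := Nat.cast_ne_zero.mpr h1.ne'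
      have hlogm : Real.log ((n1 : ℝ) * nnR a0 t) = Real.log (n1 : ℝ) + Real.log (nnR a0 t) :=
        Real.log_mul hne hn0
      simp only [hGdef]
      rw [hlogm]
      field_simp
  have hLneg : L < 0 := by rw [hLdef]; nlinarith
  have hGbot : Tendsto G atTop atBot := by
    have h := Tendsto.atTop_mul_neg hLneg tendsto_id hGdiv
    apply h.congr'
    filter_upwards [eventually_gt_atTop (1:ℝ)] with t ht
    have ht0 : t ≠ 0 := by linarith
    simp only [id]
    field_simp
  have hexp : Tendsto (fun t => Real.exp (G t)) atTop (𝓝 0) :=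
    Real.tendsto_exp_atBot.comp hGbot
  apply squeeze_zero' ?_ ?_ hexp
  · filter_upwards with t
    have h1 : (0:ℝ) ≤ c := hc.le
    have h2 : (0:ℝ) < nnR a0 t := lt_of_lt_of_le one_pos (one_le_nnR a0 t)
    have hj : (0:ℝ) < jbr t := jbr_pos t
    positivity
  · filter_upwards with t
    have hn1 : (1:ℝ) ≤ nnR a0 t := one_le_nnR a0 t
    have hn0 : (0:ℝ) < nnR a0 t := lt_of_lt_of_le one_pos hn1
    set N : ℕ := max 1 (⌊phiA a0 t⌋.toNat) with hN
    have hnnR : nnR a0 t = (N : ℝ) := rfl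
    set m : ℕ := n1 * N with hm
    have hfact : ((Nat.factorial m : ℕ) : ℝ) ≤ Real.exp (Real.log (m : ℝ) * m) := by
      calc ((Nat.factorial m : ℕ) : ℝ) ≤ ((m ^ m : ℕ) : ℝ) := by
            exact_mod_cast Nat.factorial_le_pow m
        _ = ((m : ℝ)) ^ m := by push_cast; ring
        _ = Real.exp (Real.log (m : ℝ) * m) := cast_pow_self_eq m
    have hfactpow : ((Nat.factorial m : ℕ) : ℝ) ^ n2 ≤
        Real.exp ((n2 : ℝ) * (Real.log (m : ℝ) * m)) := by
      rw [Real.exp_nat_mul]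
      exact pow_le_pow_left₀ (by positivity) hfact n2
    have e1 : c ^ N = Real.exp (Real.log c * (N : ℝ)) := by
      rw [← Real.rpow_natCast c N, Real.rpow_def_of_pos hc]
    have e2 : (Real.exp (-t)) ^ p1 = Real.exp ((-t) * p1) := by
      rw [Real.rpow_def_of_pos (Real.exp_pos _), Real.log_exp]
    have e3 : (nnR a0 t) ^ (p2 * nnR a0 t + c') =
        Real.exp (Real.log (nnR a0 t) * (p2 * nnR a0 t + c')) :=
      Real.rpow_def_of_pos hn0 _
    have e5 : (jbr t) ^ ((n3 : ℝ) * nnR a0 t + c') =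
        Real.exp (Real.log (jbr t) * ((n3 : ℝ) * nnR a0 t + c')) :=
      Real.rpow_def_of_pos (jbr_pos t) _
    calc c ^ N * (Real.exp (-t)) ^ p1 * (nnR a0 t) ^ (p2 * nnR a0 t + c') *
          ((Nat.factorial m : ℕ) : ℝ) ^ n2 * (jbr t) ^ ((n3 : ℝ) * nnR a0 t + c')
        ≤ c ^ N * (Real.exp (-t)) ^ p1 * (nnR a0 t) ^ (p2 * nnR a0 t + c') *
          Real.exp ((n2 : ℝ) * (Real.log (m : ℝ) * m)) *
          (jbr t) ^ ((n3 : ℝ) * nnR a0 t + c') := by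
          have hc0 : (0:ℝ) ≤ c := hc.le
          have hj : (0:ℝ) < jbr t := jbr_pos t
          gcongr
      _ = Real.exp (G t) := by
          rw [e1, e2, e3, e5, ← Real.exp_add, ← Real.exp_add, ← Real.exp_add, ← Real.exp_add]
          congr 1
          simp only [hGdef]
          rw [hm, hnnR]
          push_cast
          ring
end


/-- The number of Duhamel iterations `N₀(λ) = max(1, ⌊a₀|ln λ| / ln⟨ln λ⟩⌋)`. -/
noncomputable def Nzero (a0 lam : ℝ) : ℕ :=
  max 1 (⌊a0 * |Real.log lam| / Real.log (jbr (Real.log lam))⌋.toNat)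

lemma Nzero_eq (a0 lam : ℝ) : Nzero a0 lam = max 1 (⌊phiA a0 |Real.log lam|⌋.toNat) := by
  simp [Nzero, phiA, jbr_abs]

lemma abs_log_tendsto : Tendsto (fun lam => |Real.log lam|) (𝓝[>] (0:ℝ)) atTop :=
  tendsto_abs_atBot_atTop.comp Real.tendsto_log_nhdsGT_zero


/-- asymptotics of `N₀(λ)` as `λ → 0⁺`: (i) `N₀(λ) → ∞`;
(ii) `N₀ ln⟨ln λ⟩ / |ln λ| → a₀`; (iii) `N₀ ln N₀ / |ln λ| → a₀`; and consequently,
for constants `c, c' ≥ 0`, `n₁,n₂,n₃ ∈ ℕ`, `p₁,p₂ ∈ ℝ` with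
`p₁ - a₀(p₂ + n₁n₂ + n₃) > 0`, the expression
`c^{N₀} λ^{p₁} N₀^{p₂N₀+c'} ((n₁N₀)!)^{n₂} ⟨ln λ⟩^{n₃N₀+c'}` tends to `0`. -/
theorem stmt_15 (a0 : ℝ) (ha0 : 0 < a0) :
    Tendsto (fun lam => Nzero a0 lam) (𝓝[>] (0 : ℝ)) atTop
    ∧ Tendsto (fun lam => (Nzero a0 lam : ℝ) * Real.log (jbr (Real.log lam)) / |Real.log lam|)
        (𝓝[>] (0 : ℝ)) (𝓝 a0)
    ∧ Tendsto (fun lam => (Nzero a0 lam : ℝ) * Real.log (Nzero a0 lam : ℝ) / |Real.log lam|)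
        (𝓝[>] (0 : ℝ)) (𝓝 a0)
    ∧ ∀ (c c' : ℝ) (n1 n2 n3 : ℕ) (p1 p2 : ℝ),
        0 ≤ c → 0 ≤ c' →
        0 < p1 - a0 * (p2 + (n1 : ℝ) * (n2 : ℝ) + (n3 : ℝ)) →
        Tendsto (fun lam =>
            c ^ (Nzero a0 lam) * lam ^ p1 *
              (Nzero a0 lam : ℝ) ^ (p2 * (Nzero a0 lam : ℝ) + c') *
              ((Nat.factorial (n1 * Nzero a0 lam) : ℝ)) ^ n2 *
              (jbr (Real.log lam)) ^ ((n3 : ℝ) * (Nzero a0 lam : ℝ) + c'))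
          (𝓝[>] (0 : ℝ)) (𝓝 0) := by
  have T := abs_log_tendsto
  have hcast : ∀ lam : ℝ, ((Nzero a0 lam : ℕ) : ℝ) = nnR a0 |Real.log lam| := by
    intro lam; rw [Nzero_eq]; rfl
  refine ⟨?_, ?_, ?_, ?_⟩
  · rw [← tendsto_natCast_atTop_iff (R := ℝ)]
    apply ((nnR_tendsto ha0).comp T).congr
    intro lam
    exact (hcast lam).symm
  · apply ((nnR_mul_log_jbr_div ha0).comp T).congr
    intro lam
    simp only [Function.comp]
    rw [hcast lam, jbr_abs]
  · apply ((nnR_mul_log_nnR_div ha0).comp T).congr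
    intro lam
    simp only [Function.comp]
    rw [hcast lam]
  · intro c c' n1 n2 n3 p1 p2 hc hc' hp
    rcases hc.eq_or_lt with hc0 | hc0
    · apply tendsto_const_nhds.congr
      intro lam
      have hne : Nzero a0 lam ≠ 0 := Nat.one_le_iff_ne_zero.mp (le_max_left _ _)
      rw [← hc0, zero_pow hne]
      ring
    · apply ((final_atTop ha0 c c' n1 n2 n3 p1 p2 hc0 hc' hp).comp T).congr'
      filter_upwards [Ioo_mem_nhdsGT_of_mem (Set.mem_Ico.mpr ⟨le_refl (0:ℝ), one_pos⟩)]
        with lam hlam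
      have h0 : 0 < lam := hlam.1
      have hlog : Real.log lam < 0 := Real.log_neg h0 hlam.2
      have habs : |Real.log lam| = -Real.log lam := abs_of_neg hlog
      have hexp : Real.exp (-|Real.log lam|) = lam := by
        rw [habs, neg_neg, Real.exp_log h0]
      simp only [Function.comp]
      rw [hexp, jbr_abs, ← hcast lam, ← Nzero_eq]
end
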